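/- arXiv:2302.00036 — 4 statements merged into one kernel-verified Lean document; each statement's English description precedes it below -/
import Mathlib

section
/- Let the MDP (S, A, r, P) satisfy Assumption R with parameters m and r∞, and set N = 2|S| − 1, L = 2·|S|·r∞·m^{2|S|}·4^{|S|}, and η(M) = 1/(2·N^{N/2+2}·(L+1)^N). Then the Blackwell discount factor is strictly smaller than 1 − η(M): for every γ ∈ [1 − η(M), 1) and every policy π, π is γ-discounted optimal if and only if π is Blackwell-optimal. -/
open Matrix

/-- The transition matrix induced by a policy `π`. -/
def policyMatrix {S A : Type*} [Fintype S] (P : S → A → S → ℝ) (π : S → A) :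
    Matrix S S ℝ :=
  Matrix.of fun s s' => P s (π s) s'

/-- The reward vector induced by a policy `π`. -/
def policyReward {S A : Type*} (r : S → A → ℝ) (π : S → A) : S → ℝ :=
  fun s => r s (π s)

/-- The discounted value function of a policy `π`: `v^π_γ = (I - γ P_π)⁻¹ r_π`. -/
noncomputable def valueFn {S A : Type*} [Fintype S] [DecidableEq S]
    (r : S → A → ℝ) (P : S → A → S → ℝ) (π : S → A) (γ : ℝ) : S → ℝ :=
  ((1 : Matrix S S ℝ) - γ • policyMatrix P π)⁻¹ *ᵥ policyReward r π

/-- `π` is `γ`-discounted optimal. -/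
def DiscountedOptimal {S A : Type*} [Fintype S] [DecidableEq S]
    (r : S → A → ℝ) (P : S → A → S → ℝ) (γ : ℝ) (π : S → A) : Prop :=
  ∀ (π' : S → A) (s : S), valueFn r P π' γ s ≤ valueFn r P π γ s

/-- `π` is Blackwell-optimal: it is `γ'`-discounted optimal for all `γ'` in some `[γ₀, 1)`. -/
def BlackwellOptimal {S A : Type*} [Fintype S] [DecidableEq S]
    (r : S → A → ℝ) (P : S → A → S → ℝ) (π : S → A) : Prop :=
  ∃ γ₀ : ℝ, 0 ≤ γ₀ ∧ γ₀ < 1 ∧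
    ∀ γ' : ℝ, γ₀ ≤ γ' → γ' < 1 → DiscountedOptimal r P γ' π

set_option linter.unusedSectionVars false
set_option linter.unusedVariables false
set_option maxHeartbeats 1000000

open Polynomial

namespace BWAux

noncomputable def l1 (p : Polynomial ℤ) : ℕ := ∑ i ∈ p.support, (p.coeff i).natAbs

lemma l1_eq_sum {p : ℤ[X]} {T : Finset ℕ} (h : p.support ⊆ T) :
    l1 p = ∑ i ∈ T, (p.coeff i).natAbs :=
  Finset.sum_subset h (fun i _ hi => by
    simp [Polynomial.notMem_support_iff.mp hi])

lemma coeff_natAbs_le (p : ℤ[X]) (i : ℕ) : (p.coeff i).natAbs ≤ l1 p := by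
  by_cases h : i ∈ p.support
  · exact Finset.single_le_sum (f := fun i => (p.coeff i).natAbs) (fun _ _ => Nat.zero_le _) h
  · simp [Polynomial.notMem_support_iff.mp h]

lemma l1_zero : l1 0 = 0 := by simp [l1]

lemma l1_neg (p : ℤ[X]) : l1 (-p) = l1 p := by
  simp [l1, Polynomial.support_neg]

lemma l1_add_le (p q : ℤ[X]) : l1 (p + q) ≤ l1 p + l1 q := by
  rw [l1_eq_sum (Polynomial.support_add (p := p) (q := q)),
    l1_eq_sum (T := p.support ∪ q.support) Finset.subset_union_left,
    l1_eq_sum (T := p.support ∪ q.support) Finset.subset_union_right,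
    ← Finset.sum_add_distrib]
  exact Finset.sum_le_sum fun i _ => by
    simpa using Int.natAbs_add_le (p.coeff i) (q.coeff i)

lemma l1_sum_le {ι : Type*} (s : Finset ι) (f : ι → ℤ[X]) :
    l1 (∑ i ∈ s, f i) ≤ ∑ i ∈ s, l1 (f i) := by
  classical
  induction s using Finset.induction_on with
  | empty => simp [l1_zero]
  | insert _ _ h ih =>
    rw [Finset.sum_insert h, Finset.sum_insert h]
    exact (l1_add_le _ _).trans (by omega)

lemma l1_smul_le (a : ℤ) (p : ℤ[X]) : l1 (a • p) ≤ a.natAbs * l1 p := by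
  rw [l1_eq_sum (Polynomial.support_smul a p), l1, Finset.mul_sum]
  exact Finset.sum_le_sum fun i _ => by
    simp [Int.natAbs_mul]

lemma l1_C_mul_le (a : ℤ) (p : ℤ[X]) : l1 (C a * p) ≤ a.natAbs * l1 p := by
  rw [← Polynomial.smul_eq_C_mul]; exact l1_smul_le a p

lemma l1_mul_X_pow (p : ℤ[X]) (k : ℕ) : l1 (p * X ^ k) = l1 p := by
  have hsub : (p * X ^ k).support ⊆ p.support.image (· + k) := by
    intro d hd
    rw [Polynomial.mem_support_iff, Polynomial.coeff_mul_X_pow'] at hd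
    by_cases hk : k ≤ d
    · simp only [if_pos hk] at hd
      exact Finset.mem_image.mpr ⟨d - k, Polynomial.mem_support_iff.mpr hd, by omega⟩
    · simp [hk] at hd
  rw [l1_eq_sum hsub, Finset.sum_image (by intro a _ b _ h; simp only at h; omega)]
  exact Finset.sum_congr rfl fun j _ => by rw [Polynomial.coeff_mul_X_pow]

lemma l1_monomial_le (n : ℕ) (a : ℤ) : l1 (monomial n a) ≤ a.natAbs := by
  rw [l1_eq_sum (Polynomial.support_monomial' n a), Finset.sum_singleton,
    Polynomial.coeff_monomial_same]

lemma l1_mul_le (p q : ℤ[X]) : l1 (p * q) ≤ l1 p * l1 q := by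
  conv_lhs => rw [p.as_sum_support, Finset.sum_mul]
  refine (l1_sum_le _ _).trans ?_
  rw [l1, Finset.sum_mul]
  refine Finset.sum_le_sum fun i _ => ?_
  have h1 : (monomial i (p.coeff i) : ℤ[X]) * q = C (p.coeff i) * (q * X ^ i) := by
    rw [← Polynomial.C_mul_X_pow_eq_monomial]; ring
  rw [h1]
  exact (l1_C_mul_le _ _).trans (by rw [l1_mul_X_pow])

lemma l1_one : l1 (1 : ℤ[X]) ≤ 1 := by
  simpa using l1_monomial_le 0 1

lemma l1_prod_le {ι : Type*} (s : Finset ι) (f : ι → ℤ[X]) (c : ι → ℕ)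
    (h : ∀ i ∈ s, l1 (f i) ≤ c i) :
    l1 (∏ i ∈ s, f i) ≤ ∏ i ∈ s, c i := by
  classical
  induction s using Finset.induction_on with
  | empty => simpa using l1_one
  | @insert a s' hns ih =>
    rw [Finset.prod_insert hns, Finset.prod_insert hns]
    exact (l1_mul_le _ _).trans
      (Nat.mul_le_mul (h a (Finset.mem_insert_self a s'))
        (ih fun i hi => h i (Finset.mem_insert_of_mem hi)))

lemma l1_X : l1 (X : ℤ[X]) ≤ 1 := by
  simpa [Polynomial.monomial_one_one_eq_X] using l1_monomial_le 1 1


lemma l1_sub_le (p q : ℤ[X]) : l1 (p - q) ≤ l1 p + l1 q := by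
  rw [sub_eq_add_neg]
  exact (l1_add_le _ _).trans (by rw [l1_neg])

lemma l1_C_le (a : ℤ) : l1 (C a) ≤ a.natAbs := by
  simpa using l1_monomial_le 0 a

lemma l1_eq_zero {p : ℤ[X]} (h : l1 p = 0) : p = 0 := by
  ext i
  have := coeff_natAbs_le p i
  rw [h, Nat.le_zero, Int.natAbs_eq_zero] at this
  simp [this]

lemma l1_pow_le (u : ℤ[X]) (c : ℕ) (h : l1 u ≤ c) (e : ℕ) : l1 (u ^ e) ≤ c ^ e := by
  induction e with
  | zero => simpa using l1_one
  | succ e ih =>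
    rw [pow_succ, pow_succ]
    exact (l1_mul_le _ _).trans (Nat.mul_le_mul ih h)

lemma l1_X_add_one : l1 (X + C 1 : ℤ[X]) ≤ 2 := by
  refine (l1_add_le _ _).trans ?_
  have h2 : l1 (C 1 : ℤ[X]) ≤ 1 := by simpa using l1_monomial_le 0 1
  exact Nat.add_le_add l1_X h2
  
lemma l1_comp_le (g : ℤ[X]) (N : ℕ) (hdeg : g.natDegree ≤ N) :
    l1 (g.comp (X + C 1)) ≤ 2 ^ N * l1 g := by
  rw [comp_eq_sum_left, Polynomial.sum_def]
  refine (l1_sum_le _ _).trans ?_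
  rw [l1, Finset.mul_sum]
  refine Finset.sum_le_sum fun i hi => ?_
  refine (l1_C_mul_le _ _).trans ?_
  have h1 : l1 ((X + C 1 : ℤ[X]) ^ i) ≤ 2 ^ i := l1_pow_le _ 2 l1_X_add_one i
  have h2 : (2:ℕ) ^ i ≤ 2 ^ N :=
    Nat.pow_le_pow_right (by norm_num) ((Polynomial.le_natDegree_of_mem_supp i hi).trans hdeg)
  calc (g.coeff i).natAbs * l1 ((X + C 1 : ℤ[X]) ^ i)
      ≤ (g.coeff i).natAbs * 2 ^ N := Nat.mul_le_mul_left _ (h1.trans h2)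
    _ = 2 ^ N * (g.coeff i).natAbs := Nat.mul_comm _ _

lemma no_root (g : ℤ[X]) (hg : g ≠ 0) (N A : ℕ) (hdeg : g.natDegree ≤ N)
    (hA : l1 g ≤ A) (η : ℝ) (hη0 : 0 < η) (hη1 : η ≤ 1)
    (hnum : η * ((2 ^ N * A : ℕ) : ℝ) < 1) (γ : ℝ) (hγ1 : 1 - η ≤ γ) (hγ2 : γ < 1) :
    (g.map (Int.castRingHom ℝ)).eval γ ≠ 0 := by
  set h : ℤ[X] := g.comp (X + C 1) with hh
  have hh0 : h ≠ 0 := by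
    intro hc
    apply hg
    have : Polynomial.taylor 1 g = Polynomial.taylor 1 0 := by
      rw [Polynomial.taylor_apply, ← hh, hc]; simp
    exact Polynomial.taylor_injective 1 this
  set t : ℝ := γ - 1 with ht
  have ht0 : t < 0 := by simp [ht]; linarith
  have htη : -η ≤ t := by simp [ht]; linarith
  have habs1 : |t| ≤ η := by rw [abs_of_neg ht0]; linarith
  have habsp : 0 < |t| := abs_pos.mpr (ne_of_lt ht0)
  have habs2 : |t| ≤ 1 := habs1.trans hη1
  -- rewrite eval of g at γ as eval of h at t
  have heval : (g.map (Int.castRingHom ℝ)).eval γ = (h.map (Int.castRingHom ℝ)).eval t := by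
    rw [hh, Polynomial.map_comp, Polynomial.eval_comp]
    simp [ht]
  rw [heval]
  set k := h.natTrailingDegree with hk
  have hck : h.coeff k ≠ 0 := by
    have := mt Polynomial.trailingCoeff_eq_zero.mp hh0
    rwa [Polynomial.trailingCoeff] at this
  have hkmem : k ∈ h.support := Polynomial.mem_support_iff.mpr hck
  have hexp : (h.map (Int.castRingHom ℝ)).eval t
      = ∑ i ∈ h.support, ((h.coeff i : ℝ)) * t ^ i := by
    rw [Polynomial.eval_map, Polynomial.eval₂_eq_sum, Polynomial.sum_def]
    simp
  rw [← Finset.add_sum_erase _ _ hkmem] at hexp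
  -- bound on the tail
  have hl1h : (l1 h : ℝ) * |t| < 1 := by
    have h1 : l1 h ≤ 2 ^ N * A := by
      refine (l1_comp_le g N hdeg).trans ?_
      exact Nat.mul_le_mul_left _ hA
    have h2 : (l1 h : ℝ) ≤ ((2 ^ N * A : ℕ) : ℝ) := by exact_mod_cast h1
    calc (l1 h : ℝ) * |t| ≤ ((2 ^ N * A : ℕ) : ℝ) * η := by
          apply mul_le_mul h2 habs1 (abs_nonneg t) (by positivity)
      _ < 1 := by rw [mul_comm]; exact hnum
  have htail : |∑ i ∈ h.support.erase k, ((h.coeff i : ℝ)) * t ^ i|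
      ≤ (l1 h : ℝ) * (|t| ^ (k+1)) := by
    refine (Finset.abs_sum_le_sum_abs _ _).trans ?_
    have hstep : ∀ i ∈ h.support.erase k,
        |((h.coeff i : ℝ)) * t ^ i| ≤ ((h.coeff i).natAbs : ℝ) * |t| ^ (k+1) := by
      intro i hi
      have hik : k + 1 ≤ i := by
        have h1 : k ≤ i := Polynomial.natTrailingDegree_le_of_ne_zero
          (Polynomial.mem_support_iff.mp (Finset.mem_of_mem_erase hi))
        have h2 : i ≠ k := Finset.ne_of_mem_erase hi
        omega
      rw [abs_mul, abs_pow]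
      refine mul_le_mul ?_ (pow_le_pow_of_le_one (abs_nonneg t) habs2 hik) (by positivity) (by positivity)
      rw [← Int.cast_abs, Int.abs_eq_natAbs, Int.cast_natCast]
    refine (Finset.sum_le_sum hstep).trans ?_
    rw [← Finset.sum_mul]
    refine mul_le_mul_of_nonneg_right ?_ (by positivity)
    have : ∑ i ∈ h.support.erase k, ((h.coeff i).natAbs : ℝ)
        = ((∑ i ∈ h.support.erase k, (h.coeff i).natAbs : ℕ) : ℝ) := by push_cast; rfl
    rw [this]
    have : (∑ i ∈ h.support.erase k, (h.coeff i).natAbs) ≤ l1 h :=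
      Finset.sum_le_sum_of_subset (Finset.erase_subset _ _)
    exact_mod_cast this
  intro hE
  rw [hexp] at hE
  have hmain : ((h.coeff k : ℝ)) * t ^ k = -∑ i ∈ h.support.erase k, ((h.coeff i : ℝ)) * t ^ i := by
    linarith
  have hlow : |t| ^ k ≤ |((h.coeff k : ℝ)) * t ^ k| := by
    rw [abs_mul, abs_pow]
    have : (1:ℝ) ≤ |(h.coeff k : ℝ)| := by
      rw [← Int.cast_abs]
      exact_mod_cast Int.one_le_abs hck
    nlinarith [pow_nonneg (abs_nonneg t) k]
  rw [hmain, abs_neg] at hlow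
  have hfin : |t| ^ k ≤ ((l1 h : ℝ) * |t|) * |t| ^ k := by
    calc |t| ^ k ≤ (l1 h : ℝ) * |t| ^ (k+1) := hlow.trans htail
      _ = ((l1 h : ℝ) * |t|) * |t| ^ k := by ring
  nlinarith [pow_pos habsp k]

lemma fact_le_pow (p : ℕ) : Nat.factorial (p + 1) ≤ (p + 1) ^ p := by
  induction p with
  | zero => simp
  | succ p ih =>
    calc Nat.factorial (p + 2) = (p + 2) * Nat.factorial (p + 1) := rfl
      _ ≤ (p + 2) * (p + 1) ^ p := Nat.mul_le_mul_left _ ih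
      _ ≤ (p + 2) * (p + 2) ^ p := Nat.mul_le_mul_left _
          (Nat.pow_le_pow_left (by omega) p)
      _ = (p + 2) ^ (p + 1) := (pow_succ' _ _).symm

lemma numeric (n m rinf N : ℕ) (hn : 1 ≤ n) (hm : 1 ≤ m) (hrinf : 1 ≤ rinf)
    (hN : N = 2 * n - 1) (L η : ℝ)
    (hL : L = 2 * n * rinf * (m : ℝ) ^ (2 * n) * 4 ^ n)
    (hη : η = 1 / (2 * (N : ℝ) ^ ((N : ℝ) / 2 + 2) * (L + 1) ^ N)) :
    η * ((2 ^ N * (2 * n * (Nat.factorial n) ^ 2 * 4 ^ n * m ^ (2 * n) * rinf) : ℕ) : ℝ) < 1 := by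
  obtain ⟨p, rfl⟩ : ∃ p, n = p + 1 := ⟨n - 1, by omega⟩
  have hN' : N = 2 * p + 1 := by omega
  subst hN'
  set n := p + 1
  -- basic positivity facts
  have hnR : (1 : ℝ) ≤ (n : ℝ) := by exact_mod_cast hn
  have haR : (1 : ℝ) ≤ (rinf : ℝ) := by exact_mod_cast hrinf
  have hbR : (1 : ℝ) ≤ (m : ℝ) ^ (2 * n) := one_le_pow₀ (by exact_mod_cast hm)
  have hcR : (1 : ℝ) ≤ (4 : ℝ) ^ n := one_le_pow₀ (by norm_num)
  have hL1 : 2 * (n : ℝ) ≤ L := by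
    rw [hL]
    calc 2 * (n : ℝ) ≤ 2 * (n:ℝ) * rinf := le_mul_of_one_le_right (by positivity) haR
      _ ≤ 2 * (n:ℝ) * rinf * (m:ℝ) ^ (2*n) := le_mul_of_one_le_right (by positivity) hbR
      _ ≤ 2 * (n:ℝ) * rinf * (m:ℝ) ^ (2*n) * 4 ^ n := le_mul_of_one_le_right (by positivity) hcR
  have hLpos : 0 < L := by nlinarith
  have hNR : (1 : ℝ) ≤ ((2 * p + 1 : ℕ) : ℝ) := by exact_mod_cast Nat.le_add_left 1 (2*p)
  have hrpow : (1 : ℝ) ≤ ((2 * p + 1 : ℕ) : ℝ) ^ (((2 * p + 1 : ℕ) : ℝ) / 2 + 2) := by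
    have := Real.rpow_le_rpow_of_exponent_le hNR
      (show (0:ℝ) ≤ ((2 * p + 1 : ℕ) : ℝ) / 2 + 2 by positivity)
    simpa [Real.rpow_zero] using this
  have hLp : (0:ℝ) < (L + 1) ^ (2 * p + 1) := by positivity
  -- denominator positive
  have hDpos : 0 < 2 * ((2 * p + 1 : ℕ) : ℝ) ^ (((2 * p + 1 : ℕ) : ℝ) / 2 + 2)
      * (L + 1) ^ (2 * p + 1) := by
    have : (0:ℝ) < ((2 * p + 1 : ℕ) : ℝ) ^ (((2 * p + 1 : ℕ) : ℝ) / 2 + 2) := by linarith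
    positivity
  rw [hη, div_mul_eq_mul_div, one_mul, div_lt_one hDpos]
  -- the numerator in ℝ
  have hX : ((2 ^ (2*p+1) * (2 * n * (Nat.factorial n) ^ 2 * 4 ^ n * m ^ (2 * n) * rinf) : ℕ) : ℝ)
      = 2 ^ (2*p+1) * ((Nat.factorial n : ℝ)) ^ 2 * L := by
    rw [hL]; push_cast; ring
  rw [hX]
  -- key: 2^(2p+1) * (n!)^2 ≤ 2 * (L+1)^(2p)
  have hfact : ((Nat.factorial n : ℝ)) ≤ (n : ℝ) ^ p := by
    exact_mod_cast fact_le_pow p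
  have h2n : 2 * (n : ℝ) ≤ L + 1 := by linarith
  have hq : (2:ℝ) ^ p * (Nat.factorial n : ℝ) ≤ (L + 1) ^ p := by
    calc (2:ℝ) ^ p * (Nat.factorial n : ℝ) ≤ (2:ℝ) ^ p * (n : ℝ) ^ p := by
          apply mul_le_mul_of_nonneg_left hfact (by positivity)
      _ = (2 * (n:ℝ)) ^ p := (mul_pow _ _ _).symm
      _ ≤ (L + 1) ^ p := pow_le_pow_left₀ (by positivity) h2n p
  have hkey : (2:ℝ) ^ (2*p+1) * ((Nat.factorial n : ℝ)) ^ 2 ≤ 2 * (L + 1) ^ (2 * p) := by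
    have hsq := mul_le_mul hq hq (by positivity) (by positivity)
    calc (2:ℝ) ^ (2*p+1) * ((Nat.factorial n : ℝ)) ^ 2
        = 2 * (((2:ℝ) ^ p * (Nat.factorial n : ℝ)) * ((2:ℝ) ^ p * (Nat.factorial n : ℝ))) := by
          ring
      _ ≤ 2 * ((L + 1) ^ p * (L + 1) ^ p) := by nlinarith
      _ = 2 * (L + 1) ^ (2 * p) := by rw [← pow_add]; ring_nf
  have hLLp : (0:ℝ) < (L + 1) ^ (2 * p) := by positivity
  calc (2:ℝ) ^ (2*p+1) * ((Nat.factorial n : ℝ)) ^ 2 * L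
      ≤ 2 * (L + 1) ^ (2 * p) * L := by
        apply mul_le_mul_of_nonneg_right hkey (le_of_lt hLpos)
    _ < 2 * (L + 1) ^ (2 * p) * (L + 1) := by nlinarith
    _ = 2 * (L + 1) ^ (2 * p + 1) := by rw [pow_succ]; ring
    _ ≤ 2 * ((2 * p + 1 : ℕ) : ℝ) ^ (((2 * p + 1 : ℕ) : ℝ) / 2 + 2) * (L + 1) ^ (2 * p + 1) := by
        nlinarith

variable {S : Type*} [Fintype S] [DecidableEq S] [Nonempty S]
lemma l1_units_smul (u : ℤˣ) (p : ℤ[X]) : l1 (u • p) = l1 p := by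
  rw [Units.smul_def]
  rcases Int.units_eq_one_or u with h | h <;> rw [h]
  · simp
  · rw [show ((-1 : ℤˣ) : ℤ) = -1 from rfl, neg_smul, one_smul, l1_neg]

lemma natDegree_units_smul (u : ℤˣ) (p : ℤ[X]) : (u • p).natDegree = p.natDegree := by
  rw [Units.smul_def]
  rcases Int.units_eq_one_or u with h | h <;> rw [h]
  · simp
  · rw [show ((-1 : ℤˣ) : ℤ) = -1 from rfl, neg_smul, one_smul, natDegree_neg]

lemma l1_det_le (M : Matrix S S ℤ[X]) (c : ℕ) (h : ∀ s s', l1 (M s s') ≤ c) :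
    l1 M.det ≤ (Fintype.card S).factorial * c ^ (Fintype.card S) := by
  rw [Matrix.det_apply]
  refine (l1_sum_le _ _).trans ?_
  have hterm : ∀ σ : Equiv.Perm S, l1 (Equiv.Perm.sign σ • ∏ i, M (σ i) i)
      ≤ c ^ (Fintype.card S) := by
    intro σ
    rw [l1_units_smul]
    have := l1_prod_le Finset.univ (fun i => M (σ i) i) (fun _ => c)
      (fun i _ => h (σ i) i)
    simpa using this
  calc ∑ σ : Equiv.Perm S, l1 (Equiv.Perm.sign σ • ∏ i, M (σ i) i)
      ≤ ∑ _σ : Equiv.Perm S, c ^ (Fintype.card S) := Finset.sum_le_sum fun σ _ => hterm σ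
    _ = (Fintype.card S).factorial * c ^ (Fintype.card S) := by
        rw [Finset.sum_const, Finset.card_univ, Fintype.card_perm, smul_eq_mul]

lemma natDegree_det_le (M : Matrix S S ℤ[X]) (d : S → ℕ)
    (h : ∀ s s', (M s s').natDegree ≤ d s) :
    M.det.natDegree ≤ ∑ s, d s := by
  rw [Matrix.det_apply]
  refine Polynomial.natDegree_sum_le_of_forall_le _ _ fun σ _ => ?_
  rw [natDegree_units_smul]
  refine (Polynomial.natDegree_prod_le _ _).trans ?_
  calc ∑ i, (M (σ i) i).natDegree ≤ ∑ i, d (σ i) :=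
        Finset.sum_le_sum fun i _ => h (σ i) i
    _ = ∑ s, d s := Equiv.sum_comp σ d

lemma l1_adjugate_le (M : Matrix S S ℤ[X]) (c : ℕ) (hc : 1 ≤ c)
    (h : ∀ s s', l1 (M s s') ≤ c) (i j : S) :
    l1 (M.adjugate i j) ≤ (Fintype.card S).factorial * c ^ (Fintype.card S) := by
  rw [Matrix.adjugate_apply]
  refine l1_det_le _ c fun s s' => ?_
  rw [Matrix.updateRow_apply]
  split
  · by_cases his : i = s'
    · subst his; rw [Pi.single_eq_same]; simpa using (l1_monomial_le 0 1).trans hc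
    · rw [Pi.single_eq_of_ne (Ne.symm his) 1]; simp [l1_zero]
  · exact h s s'

lemma natDegree_adjugate_le (M : Matrix S S ℤ[X])
    (h : ∀ s s', (M s s').natDegree ≤ 1) (i j : S) :
    (M.adjugate i j).natDegree ≤ Fintype.card S - 1 := by
  rw [Matrix.adjugate_apply]
  have := natDegree_det_le (M.updateRow j (Pi.single i 1))
    (fun s => if s = j then 0 else 1) ?_
  · refine this.trans (le_of_eq ?_)
    rw [← Finset.add_sum_erase _ _ (Finset.mem_univ j), if_pos rfl, zero_add]
    calc ∑ s ∈ Finset.univ.erase j, (if s = j then 0 else 1)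
        = ∑ s ∈ Finset.univ.erase j, 1 :=
          Finset.sum_congr rfl fun s hs => by rw [if_neg (Finset.ne_of_mem_erase hs)]
      _ = Fintype.card S - 1 := by
          rw [Finset.sum_const, smul_eq_mul, mul_one, Finset.card_erase_of_mem (Finset.mem_univ j),
            Finset.card_univ]
  · intro s s'
    rw [Matrix.updateRow_apply]
    split
    · by_cases his : i = s'
      · subst his; rw [Pi.single_eq_same]; simp
      · rw [Pi.single_eq_of_ne (Ne.symm his) 1]; simp
    · rename_i hsj
      exact (h s s').trans (by simp [hsj])

-- determinant nonvanishing and positivity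
lemma det_one_sub_smul_ne_zero (Q : Matrix S S ℝ) (hQ0 : ∀ s s', 0 ≤ Q s s')
    (hQ1 : ∀ s, ∑ s', Q s s' = 1) (γ : ℝ) (h0 : 0 ≤ γ) (h1 : γ < 1) :
    ((1 : Matrix S S ℝ) - γ • Q).det ≠ 0 := by
  intro hdet
  obtain ⟨v, hv0, hv⟩ := (Matrix.exists_mulVec_eq_zero_iff).mpr hdet
  have hveq : ∀ s, v s = γ * ∑ s', Q s s' * v s' := by
    intro s
    have h2 := congrFun hv s
    rw [Matrix.sub_mulVec, Matrix.smul_mulVec] at h2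
    simp only [Matrix.one_mulVec, Pi.sub_apply, Pi.smul_apply, smul_eq_mul, Pi.zero_apply] at h2
    have : (Q *ᵥ v) s = ∑ s', Q s s' * v s' := rfl
    rw [this] at h2
    linarith
  obtain ⟨s₀, -, hs₀⟩ := Finset.exists_max_image Finset.univ (fun s => |v s|)
    ⟨Classical.arbitrary S, Finset.mem_univ _⟩
  have hpos : 0 < |v s₀| := by
    obtain ⟨s1, hs1⟩ := Function.ne_iff.mp hv0
    exact lt_of_lt_of_le (abs_pos.mpr hs1) (hs₀ s1 (Finset.mem_univ _))
  have hble : |v s₀| ≤ γ * |v s₀| := by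
    calc |v s₀| = γ * |∑ s', Q s₀ s' * v s'| := by
          rw [hveq s₀, abs_mul, abs_of_nonneg h0]
      _ ≤ γ * ∑ s', |Q s₀ s' * v s'| :=
          mul_le_mul_of_nonneg_left (Finset.abs_sum_le_sum_abs _ _) h0
      _ ≤ γ * ∑ s', Q s₀ s' * |v s₀| := by
          refine mul_le_mul_of_nonneg_left (Finset.sum_le_sum fun s' _ => ?_) h0
          rw [abs_mul, abs_of_nonneg (hQ0 s₀ s')]
          exact mul_le_mul_of_nonneg_left (hs₀ s' (Finset.mem_univ _)) (hQ0 s₀ s')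
      _ = γ * |v s₀| := by rw [← Finset.sum_mul, hQ1 s₀, one_mul]
  nlinarith

lemma det_one_sub_smul_pos (Q : Matrix S S ℝ) (hQ0 : ∀ s s', 0 ≤ Q s s')
    (hQ1 : ∀ s, ∑ s', Q s s' = 1) (γ : ℝ) (h0 : 0 ≤ γ) (h1 : γ < 1) :
    0 < ((1 : Matrix S S ℝ) - γ • Q).det := by
  set f : ℝ → ℝ := fun t => ((1 : Matrix S S ℝ) - t • Q).det with hf
  have hcont : Continuous f := by
    apply Continuous.matrix_det
    exact continuous_const.sub (continuous_id.smul continuous_const)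
  have hne : ∀ t, 0 ≤ t → t < 1 → f t ≠ 0 := fun t a b =>
    det_one_sub_smul_ne_zero Q hQ0 hQ1 t a b
  by_contra hle
  push_neg at hle
  have hγ0 : f γ < 0 := lt_of_le_of_ne hle (hne γ h0 h1)
  have h01 : f 0 = 1 := by simp [hf]
  have hmem : (0:ℝ) ∈ Set.uIcc (f 0) (f γ) := by
    rw [h01, Set.mem_uIcc]
    right; constructor <;> linarith
  obtain ⟨c, hc, hfc⟩ := intermediate_value_uIcc hcont.continuousOn hmem
  rw [Set.uIcc_of_le h0] at hc
  exact hne c hc.1 (lt_of_le_of_lt hc.2 h1) hfc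

noncomputable def DZ (m : ℕ) (K : Matrix S S ℕ) : Matrix S S (Polynomial ℤ) :=
  Matrix.of fun s s' =>
    (if s = s' then Polynomial.C (m : ℤ) else 0) - Polynomial.C (K s s' : ℤ) * Polynomial.X

noncomputable def uz (m : ℕ) (K : Matrix S S ℕ) (q : S → ℤ) (s : S) : Polynomial ℤ :=
  ((DZ m K).adjugate *ᵥ fun s' => Polynomial.C (q s')) s

lemma DZ_map {A : Type*} (P : S → A → S → ℝ) (π : S → A) (m : ℕ) (hm : 1 ≤ m)
    (K : Matrix S S ℕ)
    (hK : ∀ s s', P s (π s) s' = (K s s' : ℝ) / m) (γ : ℝ) :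
    (DZ m K).map (Polynomial.eval₂RingHom (Int.castRingHom ℝ) γ)
      = (m : ℝ) • ((1 : Matrix S S ℝ) - γ • policyMatrix P π) := by
  have hm0 : (m : ℝ) ≠ 0 := Nat.cast_ne_zero.mpr (by omega)
  ext s s'
  simp only [DZ, policyMatrix, Matrix.map_apply, Matrix.of_apply, Matrix.smul_apply,
    Matrix.sub_apply, Matrix.one_apply, smul_eq_mul, hK, coe_eval₂RingHom,
    apply_ite (eval₂ (Int.castRingHom ℝ) γ), eval₂_C, eval₂_zero, eval₂_sub, eval₂_mul, eval₂_X]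
  push_cast
  split <;> field_simp <;> simp only [eq_intCast, Int.cast_natCast] <;> ring

lemma eval_det {A : Type*} (P : S → A → S → ℝ) (π : S → A) (m : ℕ) (hm : 1 ≤ m)
    (K : Matrix S S ℕ)
    (hK : ∀ s s', P s (π s) s' = (K s s' : ℝ) / m) (γ : ℝ) :
    Polynomial.eval₂ (Int.castRingHom ℝ) γ (DZ m K).det
      = (m : ℝ) ^ (Fintype.card S) * ((1 : Matrix S S ℝ) - γ • policyMatrix P π).det := by
  have h1 := (Polynomial.eval₂RingHom (Int.castRingHom ℝ) γ).map_det (DZ m K)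
  rw [coe_eval₂RingHom] at h1
  rw [h1, RingHom.mapMatrix_apply, DZ_map P π m hm K hK γ, Matrix.det_smul]

lemma eval_uz {A : Type*} (r : S → A → ℝ) (P : S → A → S → ℝ) (π : S → A) (m : ℕ) (hm : 1 ≤ m)
    (K : Matrix S S ℕ) (q : S → ℤ)
    (hK : ∀ s s', P s (π s) s' = (K s s' : ℝ) / m)
    (hq : ∀ s, r s (π s) = (q s : ℝ) / m) (γ : ℝ) (s : S) :
    Polynomial.eval₂ (Int.castRingHom ℝ) γ (uz m K q s)
      = (m : ℝ) ^ (Fintype.card S) *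
        (((1 : Matrix S S ℝ) - γ • policyMatrix P π).adjugate *ᵥ policyReward r π) s := by
  have hm0 : (m : ℝ) ≠ 0 := Nat.cast_ne_zero.mpr (by omega)
  have hadj := (Polynomial.eval₂RingHom (Int.castRingHom ℝ) γ).map_adjugate (DZ m K)
  rw [RingHom.mapMatrix_apply, RingHom.mapMatrix_apply, DZ_map P π m hm K hK γ, Matrix.adjugate_smul] at hadj
  have hcard : 0 < Fintype.card S := Fintype.card_pos
  -- expand uz
  rw [uz]
  show Polynomial.eval₂ (Int.castRingHom ℝ) γ (∑ s', (DZ m K).adjugate s s' * Polynomial.C (q s'))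
    = _
  rw [Polynomial.eval₂_finset_sum]
  have hterm : ∀ s', Polynomial.eval₂ (Int.castRingHom ℝ) γ ((DZ m K).adjugate s s' * Polynomial.C (q s'))
      = ((m:ℝ) ^ (Fintype.card S - 1) *
          ((1 : Matrix S S ℝ) - γ • policyMatrix P π).adjugate s s') * (q s' : ℝ) := by
    intro s'
    rw [Polynomial.eval₂_mul, Polynomial.eval₂_C]
    congr 1
    have := congrFun (congrFun hadj s) s'
    rw [Matrix.map_apply, coe_eval₂RingHom] at this
    rw [this, Matrix.smul_apply, smul_eq_mul]
  rw [Finset.sum_congr rfl fun s' _ => hterm s']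
  have hqr : ∀ s', (q s' : ℝ) = m * r s' (π s') := by
    intro s'; rw [hq s']; field_simp
  show _ = (m:ℝ) ^ (Fintype.card S) *
    ∑ s', ((1 : Matrix S S ℝ) - γ • policyMatrix P π).adjugate s s' * policyReward r π s'
  rw [Finset.mul_sum]
  refine Finset.sum_congr rfl fun s' _ => ?_
  rw [hqr s', policyReward]
  have : (m:ℝ) ^ (Fintype.card S) = (m:ℝ) ^ (Fintype.card S - 1) * m := by
    rw [← pow_succ]
    congr 1
    omega
  rw [this]
  ring

lemma value_eq {A : Type*} (r : S → A → ℝ) (P : S → A → S → ℝ) (π : S → A) (m : ℕ) (hm : 1 ≤ m)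
    (K : Matrix S S ℕ) (q : S → ℤ)
    (hK : ∀ s s', P s (π s) s' = (K s s' : ℝ) / m)
    (hq : ∀ s, r s (π s) = (q s : ℝ) / m) (γ : ℝ)
    (hdet : ((1 : Matrix S S ℝ) - γ • policyMatrix P π).det ≠ 0) (s : S) :
    valueFn r P π γ s =
      Polynomial.eval₂ (Int.castRingHom ℝ) γ (uz m K q s) /
      Polynomial.eval₂ (Int.castRingHom ℝ) γ (DZ m K).det := by
  have hm0 : (m : ℝ) ≠ 0 := Nat.cast_ne_zero.mpr (by omega)
  set Amat := (1 : Matrix S S ℝ) - γ • policyMatrix P π with hA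
  rw [eval_det P π m hm K hK γ, eval_uz r P π m hm K q hK hq γ s]
  have hval : valueFn r P π γ s = Amat.det⁻¹ * ((Amat.adjugate *ᵥ policyReward r π) s) := by
    rw [valueFn, Matrix.inv_def, Ring.inverse_eq_inv, Matrix.smul_mulVec]
    simp [hA]
  rw [hval]
  rw [← hA]
  field_simp

end BWAux

open BWAux

/-- Under Assumption R, the Blackwell discount factor is strictly smaller than
`1 - η(M)`: for every `γ ∈ [1 - η(M), 1)`, a policy is `γ`-discounted optimal iff it is
Blackwell-optimal, where `N = 2|S| - 1`, `L = 2 |S| r∞ m^{2|S|} 4^{|S|}` and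
`η(M) = 1 / (2 N^{N/2+2} (L+1)^N)`. -/
theorem blackwell_discount_factor_lt_one_sub_eta {S A : Type*} [Fintype S] [DecidableEq S]
    [Nonempty S] [Fintype A] [Nonempty A]
    (r : S → A → ℝ) (P : S → A → S → ℝ) (m rinf : ℕ) (hm : 1 ≤ m)
    (hP : ∀ s a s', ∃ k : ℕ, k ≤ m ∧ P s a s' = (k : ℝ) / m)
    (hP0 : ∀ s a s', 0 ≤ P s a s') (hP1 : ∀ s a, ∑ s', P s a s' = 1)
    (hr : ∀ s a, ∃ q : ℤ, r s a = (q : ℝ) / m ∧ |q| ≤ (rinf : ℤ))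
    (N : ℕ) (hNdef : N = 2 * Fintype.card S - 1)
    (L : ℝ)
    (hLdef : L = 2 * Fintype.card S * rinf *
      (m : ℝ) ^ (2 * Fintype.card S) * 4 ^ Fintype.card S)
    (η : ℝ) (hηdef : η = 1 / (2 * (N : ℝ) ^ ((N : ℝ) / 2 + 2) * (L + 1) ^ N)) :
    ∀ γ : ℝ, 1 - η ≤ γ → γ < 1 →
      ∀ π : S → A, DiscountedOptimal r P γ π ↔ BlackwellOptimal r P π := by
  classical
  set n := Fintype.card S with hn_def
  have hn : 1 ≤ n := Fintype.card_pos
  have hNge1 : 1 ≤ N := by omega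
  -- η facts
  have hL0 : (0:ℝ) ≤ L := by rw [hLdef]; positivity
  have hrpow1 : (1:ℝ) ≤ (N : ℝ) ^ ((N : ℝ) / 2 + 2) := by
    have hNR : (1:ℝ) ≤ (N : ℝ) := by exact_mod_cast hNge1
    have := Real.rpow_le_rpow_of_exponent_le hNR
      (show (0:ℝ) ≤ (N : ℝ) / 2 + 2 by positivity)
    simpa [Real.rpow_zero] using this
  have hLp1 : (1:ℝ) ≤ (L + 1) ^ N := one_le_pow₀ (by linarith)
  have hden : (2:ℝ) ≤ 2 * (N : ℝ) ^ ((N : ℝ) / 2 + 2) * (L + 1) ^ N := by nlinarith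
  have hη0 : 0 < η := by rw [hηdef]; apply div_pos one_pos; linarith
  have hη2 : η ≤ 1/2 := by
    rw [hηdef, div_le_div_iff₀ (by linarith) (by norm_num)]
    linarith
  -- data extracted from assumption R
  set Kf : (S → A) → Matrix S S ℕ := fun π => Matrix.of fun s s' => (hP s (π s) s').choose
    with hKf_def
  have hKle : ∀ (π : S → A) (s s' : S), Kf π s s' ≤ m := fun π s s' =>
    (hP s (π s) s').choose_spec.1
  have hKeq : ∀ (π : S → A) (s s' : S), P s (π s) s' = (Kf π s s' : ℝ) / m := fun π s s' =>
    (hP s (π s) s').choose_spec.2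
  set qf : (S → A) → S → ℤ := fun π s => (hr s (π s)).choose with hqf_def
  have hqeq : ∀ (π : S → A) (s : S), r s (π s) = (qf π s : ℝ) / m := fun π s =>
    (hr s (π s)).choose_spec.1
  have hqle : ∀ (π : S → A) (s : S), (qf π s).natAbs ≤ rinf := fun π s => by
    have h2 : |qf π s| ≤ (rinf : ℤ) := (hr s (π s)).choose_spec.2
    rw [Int.abs_eq_natAbs] at h2
    exact_mod_cast h2
  -- the difference polynomial
  set gp : (S → A) → (S → A) → S → Polynomial ℤ := fun π₁ π₂ s =>
    uz m (Kf π₁) (qf π₁) s * (DZ m (Kf π₂)).det -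
      uz m (Kf π₂) (qf π₂) s * (DZ m (Kf π₁)).det with hgp_def
  -- stochasticity of policy matrices
  have hQ0 : ∀ (π : S → A) (s s' : S), 0 ≤ policyMatrix P π s s' := fun π s s' =>
    hP0 s (π s) s'
  have hQ1 : ∀ (π : S → A) (s : S), ∑ s', policyMatrix P π s s' = 1 := fun π s =>
    hP1 s (π s)
  -- determinant positivity
  have hdpos : ∀ (π : S → A) (γ' : ℝ), 0 ≤ γ' → γ' < 1 →
      0 < ((1 : Matrix S S ℝ) - γ' • policyMatrix P π).det := fun π γ' h0 h1 =>
    det_one_sub_smul_pos (policyMatrix P π) (hQ0 π) (hQ1 π) γ' h0 h1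
  have hepos : ∀ (π : S → A) (γ' : ℝ), 0 ≤ γ' → γ' < 1 →
      0 < Polynomial.eval₂ (Int.castRingHom ℝ) γ' (DZ m (Kf π)).det := by
    intro π γ' h0 h1
    rw [eval_det P π m hm (Kf π) (hKeq π) γ']
    have h2 := hdpos π γ' h0 h1
    have h3 : (0:ℝ) < (m:ℝ) ^ (Fintype.card S) := by positivity
    exact mul_pos h3 h2
  -- the value difference as a rational function
  have hdiff : ∀ (π₁ π₂ : S → A) (s : S) (γ' : ℝ), 0 ≤ γ' → γ' < 1 →
      valueFn r P π₁ γ' s - valueFn r P π₂ γ' s =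
        Polynomial.eval₂ (Int.castRingHom ℝ) γ' (gp π₁ π₂ s) /
          (Polynomial.eval₂ (Int.castRingHom ℝ) γ' (DZ m (Kf π₁)).det *
           Polynomial.eval₂ (Int.castRingHom ℝ) γ' (DZ m (Kf π₂)).det) := by
    intro π₁ π₂ s γ' h0 h1
    have hd1 := hepos π₁ γ' h0 h1
    have hd2 := hepos π₂ γ' h0 h1
    rw [value_eq r P π₁ m hm (Kf π₁) (qf π₁) (hKeq π₁) (hqeq π₁) γ'
        (ne_of_gt (hdpos π₁ γ' h0 h1)) s,
      value_eq r P π₂ m hm (Kf π₂) (qf π₂) (hKeq π₂) (hqeq π₂) γ'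
        (ne_of_gt (hdpos π₂ γ' h0 h1)) s,
      div_sub_div _ _ (ne_of_gt hd1) (ne_of_gt hd2), hgp_def]
    rw [Polynomial.eval₂_sub, Polynomial.eval₂_mul, Polynomial.eval₂_mul]
    ring
  -- l1 and degree bounds
  have hDZ_l1 : ∀ (π : S → A) (s s' : S), l1 (DZ m (Kf π) s s') ≤ 2 * m := by
    intro π s s'
    rw [show DZ m (Kf π) s s' = (if s = s' then (Polynomial.C (m:ℤ)) else 0)
      - Polynomial.C ((Kf π s s' : ℤ)) * Polynomial.X from rfl]
    refine (l1_sub_le _ _).trans ?_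
    have h1 : l1 (if s = s' then (Polynomial.C (m:ℤ)) else 0) ≤ m := by
      split
      · exact (l1_C_le _).trans (by simp)
      · simp [l1_zero]
    have h2 : l1 (Polynomial.C ((Kf π s s' : ℤ)) * Polynomial.X) ≤ m := by
      refine (l1_C_mul_le _ _).trans ?_
      calc ((Kf π s s' : ℤ)).natAbs * l1 (Polynomial.X : Polynomial ℤ)
          ≤ ((Kf π s s' : ℤ)).natAbs * 1 := Nat.mul_le_mul_left _ l1_X
        _ ≤ m := by simpa using hKle π s s'
    omega
  have hDZ_deg : ∀ (π : S → A) (s s' : S), (DZ m (Kf π) s s').natDegree ≤ 1 := by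
    intro π s s'
    rw [show DZ m (Kf π) s s' = (if s = s' then (Polynomial.C (m:ℤ)) else 0)
      - Polynomial.C ((Kf π s s' : ℤ)) * Polynomial.X from rfl]
    refine (Polynomial.natDegree_sub_le _ _).trans ?_
    have h1 : (if s = s' then (Polynomial.C (m:ℤ)) else 0).natDegree ≤ 1 := by
      split <;> simp
    have h2 : (Polynomial.C ((Kf π s s' : ℤ)) * Polynomial.X).natDegree ≤ 1 := by
      refine (Polynomial.natDegree_mul_le).trans ?_
      simp
    omega
  have hd_l1 : ∀ π : S → A, l1 (DZ m (Kf π)).det ≤ n.factorial * (2*m)^n :=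
    fun π => l1_det_le _ _ (hDZ_l1 π)
  have hd_deg : ∀ π : S → A, (DZ m (Kf π)).det.natDegree ≤ n := by
    intro π
    have := natDegree_det_le (DZ m (Kf π)) (fun _ => 1) (hDZ_deg π)
    simpa using this
  have hm2 : 1 ≤ 2 * m := by omega
  have hu_l1 : ∀ (π : S → A) (s : S), l1 (uz m (Kf π) (qf π) s)
      ≤ n * (n.factorial * (2*m)^n) * rinf := by
    intro π s
    rw [uz]
    show l1 (∑ s', (DZ m (Kf π)).adjugate s s' * Polynomial.C (qf π s')) ≤ _
    refine (l1_sum_le _ _).trans ?_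
    have hterm : ∀ s' : S, l1 ((DZ m (Kf π)).adjugate s s' * Polynomial.C (qf π s'))
        ≤ (n.factorial * (2*m)^n) * rinf := by
      intro s'
      refine (l1_mul_le _ _).trans ?_
      exact Nat.mul_le_mul (l1_adjugate_le _ _ hm2 (hDZ_l1 π) s s')
        ((l1_C_le _).trans (hqle π s'))
    calc ∑ s', l1 ((DZ m (Kf π)).adjugate s s' * Polynomial.C (qf π s'))
        ≤ ∑ _s' : S, (n.factorial * (2*m)^n) * rinf :=
          Finset.sum_le_sum fun s' _ => hterm s'
      _ = n * ((n.factorial * (2*m)^n) * rinf) := by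
          rw [Finset.sum_const, Finset.card_univ, smul_eq_mul]
      _ = n * (n.factorial * (2*m)^n) * rinf := by ring
  have hu_deg : ∀ (π : S → A) (s : S), (uz m (Kf π) (qf π) s).natDegree ≤ n - 1 := by
    intro π s
    rw [uz]
    show (∑ s', (DZ m (Kf π)).adjugate s s' * Polynomial.C (qf π s')).natDegree ≤ n - 1
    refine Polynomial.natDegree_sum_le_of_forall_le _ _ fun s' _ => ?_
    refine (Polynomial.natDegree_mul_le).trans ?_
    have h1 := natDegree_adjugate_le (DZ m (Kf π)) (hDZ_deg π) s s'
    have h2 : (Polynomial.C (qf π s')).natDegree = 0 := Polynomial.natDegree_C _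
    omega
  set A₀ : ℕ := 2 * n * (n.factorial)^2 * 4^n * m^(2*n) * rinf with hA₀_def
  have hG_l1 : ∀ (π₁ π₂ : S → A) (s : S), l1 (gp π₁ π₂ s) ≤ A₀ := by
    intro π₁ π₂ s
    refine (l1_sub_le _ _).trans ?_
    have h1 : l1 (uz m (Kf π₁) (qf π₁) s * (DZ m (Kf π₂)).det)
        ≤ (n * (n.factorial * (2*m)^n) * rinf) * (n.factorial * (2*m)^n) :=
      (l1_mul_le _ _).trans (Nat.mul_le_mul (hu_l1 π₁ s) (hd_l1 π₂))
    have h2 : l1 (uz m (Kf π₂) (qf π₂) s * (DZ m (Kf π₁)).det)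
        ≤ (n * (n.factorial * (2*m)^n) * rinf) * (n.factorial * (2*m)^n) :=
      (l1_mul_le _ _).trans (Nat.mul_le_mul (hu_l1 π₂ s) (hd_l1 π₁))
    have hpow : (2*m)^n * (2*m)^n = 4^n * m^(2*n) := by
      calc (2*m)^n * (2*m)^n = (2*m)^(2*n) := by rw [← pow_add]; congr 1; omega
        _ = 2^(2*n) * m^(2*n) := mul_pow _ _ _
        _ = 4^n * m^(2*n) := by rw [pow_mul]; norm_num
    have heq : (n * (n.factorial * (2*m)^n) * rinf) * (n.factorial * (2*m)^n)
        + (n * (n.factorial * (2*m)^n) * rinf) * (n.factorial * (2*m)^n) = A₀ := by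
      rw [hA₀_def]
      calc (n * (n.factorial * (2*m)^n) * rinf) * (n.factorial * (2*m)^n)
          + (n * (n.factorial * (2*m)^n) * rinf) * (n.factorial * (2*m)^n)
          = 2*n*(n.factorial)^2*((2*m)^n*(2*m)^n)*rinf := by ring
        _ = 2*n*(n.factorial)^2*(4^n*m^(2*n))*rinf := by rw [hpow]
        _ = 2*n*(n.factorial)^2*4^n*m^(2*n)*rinf := by ring
    omega
  have hG_deg : ∀ (π₁ π₂ : S → A) (s : S), (gp π₁ π₂ s).natDegree ≤ N := by
    intro π₁ π₂ s
    refine (Polynomial.natDegree_sub_le _ _).trans ?_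
    have h1 : (uz m (Kf π₁) (qf π₁) s * (DZ m (Kf π₂)).det).natDegree ≤ (n-1) + n :=
      Polynomial.natDegree_mul_le.trans (Nat.add_le_add (hu_deg π₁ s) (hd_deg π₂))
    have h2 : (uz m (Kf π₂) (qf π₂) s * (DZ m (Kf π₁)).det).natDegree ≤ (n-1) + n :=
      Polynomial.natDegree_mul_le.trans (Nat.add_le_add (hu_deg π₂ s) (hd_deg π₁))
    omega
  -- the key sign-transfer property
  have key : ∀ (π₁ π₂ : S → A) (s : S) (γ₁ γ₂ : ℝ), 1 - η ≤ γ₁ → γ₁ < 1 →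
      1 - η ≤ γ₂ → γ₂ < 1 →
      valueFn r P π₂ γ₁ s ≤ valueFn r P π₁ γ₁ s →
      valueFn r P π₂ γ₂ s ≤ valueFn r P π₁ γ₂ s := by
    intro π₁ π₂ s γ₁ γ₂ ha1 hb1 ha2 hb2 hle
    have h01 : (0:ℝ) ≤ γ₁ := by linarith
    have h02 : (0:ℝ) ≤ γ₂ := by linarith
    by_cases hG : gp π₁ π₂ s = 0
    · have h2 := hdiff π₁ π₂ s γ₂ h02 hb2
      rw [hG] at h2
      simp only [Polynomial.eval₂_zero, zero_div] at h2
      linarith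
    · have hl1G : 1 ≤ l1 (gp π₁ π₂ s) :=
        Nat.one_le_iff_ne_zero.mpr (fun hc => hG (l1_eq_zero hc))
      have hrinf1 : 1 ≤ rinf := by
        by_contra hc
        have hr0 : rinf = 0 := by omega
        have hA0 : A₀ = 0 := by rw [hA₀_def, hr0]; ring
        have := hG_l1 π₁ π₂ s
        omega
      have hnum := numeric n m rinf N hn hm hrinf1 hNdef L η hLdef hηdef
      have hnum' : η * ((2 ^ N * l1 (gp π₁ π₂ s) : ℕ) : ℝ) < 1 := by
        refine lt_of_le_of_lt ?_ hnum
        refine mul_le_mul_of_nonneg_left ?_ (le_of_lt hη0)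
        exact_mod_cast Nat.mul_le_mul_left (2^N) (hG_l1 π₁ π₂ s)
      have hno : ∀ c : ℝ, 1 - η ≤ c → c < 1 →
          Polynomial.eval₂ (Int.castRingHom ℝ) c (gp π₁ π₂ s) ≠ 0 := by
        intro c hc1 hc2
        have := no_root (gp π₁ π₂ s) hG N (l1 (gp π₁ π₂ s)) (hG_deg π₁ π₂ s) (le_refl _)
          η hη0 (by linarith) hnum' c hc1 hc2
        rwa [Polynomial.eval_map] at this
      by_contra hlt
      push_neg at hlt
      have hD1 := mul_pos (hepos π₁ γ₁ h01 hb1) (hepos π₂ γ₁ h01 hb1)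
      have hD2 := mul_pos (hepos π₁ γ₂ h02 hb2) (hepos π₂ γ₂ h02 hb2)
      have he1 : 0 ≤ Polynomial.eval₂ (Int.castRingHom ℝ) γ₁ (gp π₁ π₂ s) := by
        have h := hdiff π₁ π₂ s γ₁ h01 hb1
        have hd : 0 ≤ valueFn r P π₁ γ₁ s - valueFn r P π₂ γ₁ s := by linarith
        have h' : Polynomial.eval₂ (Int.castRingHom ℝ) γ₁ (gp π₁ π₂ s)
            = (valueFn r P π₁ γ₁ s - valueFn r P π₂ γ₁ s) *
              (Polynomial.eval₂ (Int.castRingHom ℝ) γ₁ (DZ m (Kf π₁)).det *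
               Polynomial.eval₂ (Int.castRingHom ℝ) γ₁ (DZ m (Kf π₂)).det) := by
          rw [h]; field_simp; rw [mul_assoc, mul_div_assoc, div_self (ne_of_gt hD1), mul_one]
        rw [h']
        exact mul_nonneg hd (le_of_lt hD1)
      have he2 : Polynomial.eval₂ (Int.castRingHom ℝ) γ₂ (gp π₁ π₂ s) < 0 := by
        have h := hdiff π₁ π₂ s γ₂ h02 hb2
        have hd : valueFn r P π₁ γ₂ s - valueFn r P π₂ γ₂ s < 0 := by linarith
        have h' : Polynomial.eval₂ (Int.castRingHom ℝ) γ₂ (gp π₁ π₂ s)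
            = (valueFn r P π₁ γ₂ s - valueFn r P π₂ γ₂ s) *
              (Polynomial.eval₂ (Int.castRingHom ℝ) γ₂ (DZ m (Kf π₁)).det *
               Polynomial.eval₂ (Int.castRingHom ℝ) γ₂ (DZ m (Kf π₂)).det) := by
          rw [h]; field_simp; rw [mul_assoc, mul_div_assoc, div_self (ne_of_gt hD2), mul_one]
        rw [h']
        exact mul_neg_of_neg_of_pos hd hD2
      set F : ℝ → ℝ := fun c => Polynomial.eval c ((gp π₁ π₂ s).map (Int.castRingHom ℝ))
        with hF
      have hFeq : ∀ c, F c = Polynomial.eval₂ (Int.castRingHom ℝ) c (gp π₁ π₂ s) :=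
        fun c => Polynomial.eval_map _ _
      have hcont : Continuous F := Polynomial.continuous _
      have hmem : (0:ℝ) ∈ Set.uIcc (F γ₁) (F γ₂) := by
        rw [Set.mem_uIcc]
        right
        constructor
        · rw [hFeq]; linarith
        · rw [hFeq]; linarith
      obtain ⟨c, hc, hFc⟩ := intermediate_value_uIcc hcont.continuousOn hmem
      rw [Set.mem_uIcc] at hc
      have hc1 : 1 - η ≤ c := by rcases hc with ⟨h,_⟩|⟨h,_⟩ <;> linarith
      have hc2 : c < 1 := by rcases hc with ⟨_,h⟩|⟨_,h⟩ <;> linarith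
      exact hno c hc1 hc2 (by rw [← hFeq]; exact hFc)
  -- conclusion
  intro γ hγ1 hγ2 π
  constructor
  · intro hopt
    refine ⟨1 - η, by linarith, by linarith, ?_⟩
    intro γ' h1' h2' π' s
    exact key π π' s γ γ' hγ1 hγ2 h1' h2' (hopt π' s)
  · rintro ⟨γ₀, hγ₀0, hγ₀1, hbw⟩
    intro π' s
    have hmax1 : max γ₀ (1 - η) < 1 := max_lt hγ₀1 (by linarith)
    have hopt' := hbw (max γ₀ (1 - η)) (le_max_left _ _) hmax1
    exact key π π' s (max γ₀ (1 - η)) γ (le_max_right _ _) hmax1 hγ1 hγ2 (hopt' π' s)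
end

section
/- Let S, A be nonempty finite sets, r : S × A → ℝ, and let 𝒰 be a nonempty finite set of transition kernels P : S × A → Δ(S). Then the robust Blackwell discount factor exists: there is γ̄ ∈ [0,1) such that for every γ ∈ (γ̄, 1) and every policy π, π is robust γ-discounted optimal if and only if π is robust Blackwell-optimal. -/
open Matrix

open Polynomial

/-- Sign stability of a polynomial near 1 from the left. -/
lemma poly_sign_stable (h : Polynomial ℝ) :
    ∃ b : ℝ, 0 ≤ b ∧ b < 1 ∧ ∀ γ₁ ∈ Set.Ioo b (1:ℝ), ∀ γ₂ ∈ Set.Ioo b (1:ℝ),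
      (h.eval γ₁ ≤ 0 ↔ h.eval γ₂ ≤ 0) := by
  by_cases h0 : h = 0
  · exact ⟨1/2, by norm_num, by norm_num, fun _ _ _ _ => by simp [h0]⟩
  · classical
    set F : Finset ℝ := insert 0 (h.roots.toFinset.filter (· < 1)) with hF
    have hFne : F.Nonempty := ⟨0, Finset.mem_insert_self _ _⟩
    have hlt1 : ∀ x ∈ F, x < 1 := by
      intro x hx
      rcases Finset.mem_insert.1 hx with rfl | hx
      · norm_num
      · exact (Finset.mem_filter.1 hx).2
    have hb1 : F.max' hFne < 1 := hlt1 _ (F.max'_mem hFne)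
    have hb0 : (0:ℝ) ≤ F.max' hFne := F.le_max' 0 (Finset.mem_insert_self _ _)
    have hne : ∀ γ ∈ Set.Ioo (F.max' hFne) (1:ℝ), h.eval γ ≠ 0 := by
      intro γ hγ hev
      have : γ ∈ F := by
        refine Finset.mem_insert_of_mem (Finset.mem_filter.2 ⟨?_, hγ.2⟩)
        exact Multiset.mem_toFinset.2 ((Polynomial.mem_roots h0).2 (by exact hev))
      exact absurd (F.le_max' γ this) (not_le.2 hγ.1)
    have key : ∀ γ₁ ∈ Set.Ioo (F.max' hFne) (1:ℝ), ∀ γ₂ ∈ Set.Ioo (F.max' hFne) (1:ℝ),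
        h.eval γ₁ ≤ 0 → h.eval γ₂ ≤ 0 := by
      intro γ₁ h₁ γ₂ h₂ hle
      by_contra hgt
      push_neg at hgt
      have h1' : h.eval γ₁ < 0 := lt_of_le_of_ne hle (hne γ₁ h₁)
      have hsub : Set.uIcc γ₁ γ₂ ⊆ Set.Ioo (F.max' hFne) (1:ℝ) :=
        Set.ordConnected_Ioo.uIcc_subset h₁ h₂
      have hcont : ContinuousOn (fun x => h.eval x) (Set.uIcc γ₁ γ₂) :=
        (Polynomial.continuous h).continuousOn
      have h0mem : (0:ℝ) ∈ Set.uIcc (h.eval γ₁) (h.eval γ₂) :=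
        Set.mem_uIcc.2 (Or.inl ⟨le_of_lt h1', le_of_lt hgt⟩)
      obtain ⟨c, hc, hc0⟩ := intermediate_value_uIcc hcont h0mem
      exact hne c (hsub hc) hc0
    exact ⟨F.max' hFne, hb0, hb1, fun γ₁ h₁ γ₂ h₂ => ⟨key γ₁ h₁ γ₂ h₂, key γ₂ h₂ γ₁ h₁⟩⟩

section
variable {S : Type*} [Fintype S] [DecidableEq S]

/-- The polynomial matrix `1 - X • M`. -/
noncomputable def polyMat (M : Matrix S S ℝ) : Matrix S S (Polynomial ℝ) :=
  (1 : Matrix S S (Polynomial ℝ)) - (X : Polynomial ℝ) • M.map C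

lemma polyMat_map (M : Matrix S S ℝ) (γ : ℝ) :
    (evalRingHom γ).mapMatrix (polyMat M) = (1 : Matrix S S ℝ) - γ • M := by
  ext i j
  simp only [polyMat, RingHom.mapMatrix_apply, Matrix.map_apply, Matrix.sub_apply,
    Matrix.smul_apply, Matrix.one_apply, smul_eq_mul]
  have : (evalRingHom γ) ((if i = j then 1 else 0) - X * C (M i j))
      = (if i = j then (1:ℝ) else 0) - γ * M i j := by
    rw [map_sub, _root_.map_mul]
    simp [coe_evalRingHom, apply_ite (evalRingHom γ), mul_comm]
  exact this

/-- `det (1 - γ M)` as a polynomial in `γ`. -/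
noncomputable def detPoly (M : Matrix S S ℝ) : Polynomial ℝ := (polyMat M).det

lemma detPoly_eval (M : Matrix S S ℝ) (γ : ℝ) :
    (detPoly M).eval γ = ((1 : Matrix S S ℝ) - γ • M).det := by
  have := RingHom.map_det (evalRingHom γ) (polyMat M)
  rw [detPoly, ← polyMat_map M γ]
  simpa using this

/-- `(adjugate (1 - γ M) *ᵥ w) s` as a polynomial in `γ`. -/
noncomputable def numPoly (M : Matrix S S ℝ) (w : S → ℝ) (s : S) : Polynomial ℝ :=
  ((polyMat M).adjugate *ᵥ fun j => C (w j)) s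

lemma numPoly_eval (M : Matrix S S ℝ) (w : S → ℝ) (s : S) (γ : ℝ) :
    (numPoly M w s).eval γ = (((1 : Matrix S S ℝ) - γ • M).adjugate *ᵥ w) s := by
  have hadj : (evalRingHom γ).mapMatrix (polyMat M).adjugate
      = ((1 : Matrix S S ℝ) - γ • M).adjugate := by
    rw [RingHom.map_adjugate, polyMat_map]
  have hentry : ∀ j, ((polyMat M).adjugate s j).eval γ
      = ((1 : Matrix S S ℝ) - γ • M).adjugate s j := by
    intro j
    have := congrFun (congrFun (congrArg (fun N => (N : Matrix S S ℝ)) hadj) s) j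
    simpa [RingHom.mapMatrix_apply, Matrix.map_apply] using this
  simp [numPoly, mulVec, dotProduct, Polynomial.eval_finset_sum, hentry]

end

section
variable {S : Type*} [Fintype S] [DecidableEq S]

lemma det_one_sub_smul_ne_zero (M : Matrix S S ℝ) (hnn : ∀ i j, 0 ≤ M i j)
    (hrow : ∀ i, ∑ j, M i j = 1) {γ : ℝ} (hγ0 : 0 ≤ γ) (hγ1 : γ < 1) :
    ((1 : Matrix S S ℝ) - γ • M).det ≠ 0 := by
  intro hdet
  obtain ⟨v, hv0, hv⟩ := (Matrix.exists_mulVec_eq_zero_iff).2 hdet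
  rw [Matrix.sub_mulVec, Matrix.one_mulVec, Matrix.smul_mulVec] at hv
  have hfix : ∀ i, v i = γ * ∑ j, M i j * v j := by
    intro i
    have := congrFun hv i
    simp only [Pi.sub_apply, Pi.smul_apply, Pi.zero_apply, smul_eq_mul,
      Matrix.mulVec, dotProduct] at this
    linarith
  obtain ⟨j₀, hj₀⟩ := Function.ne_iff.1 hv0
  obtain ⟨i₀, -, hmax⟩ :=
    Finset.exists_max_image Finset.univ (fun i => |v i|) ⟨j₀, Finset.mem_univ j₀⟩
  have hpos : 0 < |v i₀| :=
    lt_of_lt_of_le (abs_pos.2 hj₀) (hmax j₀ (Finset.mem_univ j₀))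
  have hbound : |v i₀| ≤ γ * |v i₀| := by
    calc |v i₀| = γ * |∑ j, M i₀ j * v j| := by
          rw [hfix i₀, abs_mul, abs_of_nonneg hγ0]
      _ ≤ γ * ∑ j, M i₀ j * |v i₀| := by
          refine mul_le_mul_of_nonneg_left ?_ hγ0
          refine le_trans (Finset.abs_sum_le_sum_abs _ _) ?_
          refine Finset.sum_le_sum fun j _ => ?_
          rw [abs_mul, abs_of_nonneg (hnn i₀ j)]
          exact mul_le_mul_of_nonneg_left (hmax j (Finset.mem_univ j)) (hnn i₀ j)
      _ = γ * |v i₀| := by rw [← Finset.sum_mul, hrow i₀, one_mul]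
  nlinarith

lemma detPoly_eval_pos (M : Matrix S S ℝ) (hnn : ∀ i j, 0 ≤ M i j)
    (hrow : ∀ i, ∑ j, M i j = 1) {γ : ℝ} (hγ0 : 0 ≤ γ) (hγ1 : γ < 1) :
    0 < (detPoly M).eval γ := by
  have hne : ∀ c : ℝ, 0 ≤ c → c < 1 → (detPoly M).eval c ≠ 0 := by
    intro c hc0 hc1
    rw [detPoly_eval]
    exact det_one_sub_smul_ne_zero M hnn hrow hc0 hc1
  have h0 : (detPoly M).eval 0 = 1 := by
    rw [detPoly_eval]; simp
  rcases lt_trichotomy ((detPoly M).eval γ) 0 with hlt | heq | hgt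
  · exfalso
    have hcont : ContinuousOn (fun x => (detPoly M).eval x) (Set.Icc 0 γ) :=
      (Polynomial.continuous _).continuousOn
    have h0mem : (0:ℝ) ∈ Set.Icc ((fun x => (detPoly M).eval x) γ)
        ((fun x => (detPoly M).eval x) 0) := by
      simp only [h0]
      exact ⟨le_of_lt hlt, by norm_num⟩
    obtain ⟨c, hc, hc0⟩ := intermediate_value_Icc' hγ0 hcont h0mem
    exact hne c hc.1 (lt_of_le_of_lt hc.2 hγ1) hc0
  · exact absurd heq (hne γ hγ0 hγ1)
  · exact hgt

end

/-- The worst-case (robust) value function over a nonempty finite set `U` of kernels: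
`v^{π,U}_{γ,s} = min_{P ∈ U} v^{π,P}_{γ,s}`. -/
noncomputable def robustValueFn {S A : Type*} [Fintype S] [DecidableEq S]
    (r : S → A → ℝ) (U : Finset (S → A → S → ℝ)) (hU : U.Nonempty)
    (π : S → A) (γ : ℝ) (s : S) : ℝ :=
  U.inf' hU fun P => valueFn r P π γ s

/-- `π` is robust `γ`-discounted optimal. -/
def RobustDiscountedOptimal {S A : Type*} [Fintype S] [DecidableEq S]
    (r : S → A → ℝ) (U : Finset (S → A → S → ℝ)) (hU : U.Nonempty)
    (γ : ℝ) (π : S → A) : Prop :=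
  ∀ (π' : S → A) (s : S), robustValueFn r U hU π' γ s ≤ robustValueFn r U hU π γ s

/-- `π` is robust Blackwell-optimal: robust `γ'`-discounted optimal for all `γ'` in some
`[γ₀, 1)`. -/
def RobustBlackwellOptimal {S A : Type*} [Fintype S] [DecidableEq S]
    (r : S → A → ℝ) (U : Finset (S → A → S → ℝ)) (hU : U.Nonempty)
    (π : S → A) : Prop :=
  ∃ γ₀ : ℝ, 0 ≤ γ₀ ∧ γ₀ < 1 ∧
    ∀ γ' : ℝ, γ₀ ≤ γ' → γ' < 1 → RobustDiscountedOptimal r U hU γ' π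

open Polynomial in
lemma valueFn_eq {S A : Type*} [Fintype S] [DecidableEq S]
    (r : S → A → ℝ) (P : S → A → S → ℝ) (π : S → A) (γ : ℝ)
    (hdet : ((1 : Matrix S S ℝ) - γ • policyMatrix P π).det ≠ 0) (s : S) :
    valueFn r P π γ s
      = (numPoly (policyMatrix P π) (policyReward r π) s).eval γ
        / (detPoly (policyMatrix P π)).eval γ := by
  rw [valueFn, Matrix.inv_def, Ring.inverse_eq_inv, Matrix.smul_mulVec]
  rw [numPoly_eval, detPoly_eval]
  simp [div_eq_inv_mul]

open Polynomial in
lemma valueFn_le_iff {S A : Type*} [Fintype S] [DecidableEq S]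
    (r : S → A → ℝ) (P Q : S → A → S → ℝ) (π π' : S → A)
    (hPnn : ∀ i j, 0 ≤ policyMatrix P π i j)
    (hProw : ∀ i, ∑ j, policyMatrix P π i j = 1)
    (hQnn : ∀ i j, 0 ≤ policyMatrix Q π' i j)
    (hQrow : ∀ i, ∑ j, policyMatrix Q π' i j = 1)
    {γ : ℝ} (hγ0 : 0 ≤ γ) (hγ1 : γ < 1) (s : S) :
    (valueFn r P π γ s ≤ valueFn r Q π' γ s ↔
      (numPoly (policyMatrix P π) (policyReward r π) s * detPoly (policyMatrix Q π')
        - numPoly (policyMatrix Q π') (policyReward r π') s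
          * detPoly (policyMatrix P π)).eval γ ≤ 0) := by
  have hdP : 0 < (detPoly (policyMatrix P π)).eval γ :=
    detPoly_eval_pos _ hPnn hProw hγ0 hγ1
  have hdQ : 0 < (detPoly (policyMatrix Q π')).eval γ :=
    detPoly_eval_pos _ hQnn hQrow hγ0 hγ1
  rw [valueFn_eq r P π γ (by rw [← detPoly_eval]; exact ne_of_gt hdP) s,
    valueFn_eq r Q π' γ (by rw [← detPoly_eval]; exact ne_of_gt hdQ) s,
    div_le_div_iff₀ hdP hdQ, Polynomial.eval_sub, Polynomial.eval_mul,
    Polynomial.eval_mul, sub_nonpos]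

/-- The robust Blackwell discount factor exists: there is `γ̄ ∈ [0,1)` such that for every
`γ ∈ (γ̄, 1)`, a policy is robust `γ`-discounted optimal iff it is robust
Blackwell-optimal. -/
theorem exists_robust_blackwell_discount_factor {S A : Type*} [Fintype S] [DecidableEq S]
    [Nonempty S] [Fintype A] [Nonempty A]
    (r : S → A → ℝ) (U : Finset (S → A → S → ℝ)) (hU : U.Nonempty)
    (hkernel : ∀ P ∈ U, ∀ (s : S) (a : A), (∀ s', 0 ≤ P s a s') ∧ ∑ s', P s a s' = 1) :
    ∃ γbar : ℝ, 0 ≤ γbar ∧ γbar < 1 ∧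
      ∀ γ : ℝ, γbar < γ → γ < 1 →
        ∀ π : S → A,
          RobustDiscountedOptimal r U hU γ π ↔ RobustBlackwellOptimal r U hU π := by
  classical
  have hstoch : ∀ P ∈ U, ∀ π : S → A,
      (∀ i j, 0 ≤ policyMatrix P π i j) ∧ (∀ i, ∑ j, policyMatrix P π i j = 1) := by
    intro P hP π
    exact ⟨fun i j => (hkernel P hP i (π i)).1 j, fun i => (hkernel P hP i (π i)).2⟩
  -- stability of each atomic comparison
  have hatom : ∀ (π π' : S → A) (s : S) (P Q : S → A → S → ℝ),
      ∃ b : ℝ, 0 ≤ b ∧ b < 1 ∧ (P ∈ U → Q ∈ U →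
        ∀ γ₁ ∈ Set.Ioo b (1:ℝ), ∀ γ₂ ∈ Set.Ioo b (1:ℝ),
          (valueFn r P π γ₁ s ≤ valueFn r Q π' γ₁ s ↔
            valueFn r P π γ₂ s ≤ valueFn r Q π' γ₂ s)) := by
    intro π π' s P Q
    obtain ⟨b, hb0, hb1, hb⟩ := poly_sign_stable
      (numPoly (policyMatrix P π) (policyReward r π) s * detPoly (policyMatrix Q π')
        - numPoly (policyMatrix Q π') (policyReward r π') s * detPoly (policyMatrix P π))
    refine ⟨b, hb0, hb1, fun hP hQ γ₁ h₁ γ₂ h₂ => ?_⟩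
    rw [valueFn_le_iff r P Q π π' (hstoch P hP π).1 (hstoch P hP π).2
        (hstoch Q hQ π').1 (hstoch Q hQ π').2 (le_trans hb0 (le_of_lt h₁.1)) h₁.2 s,
      valueFn_le_iff r P Q π π' (hstoch P hP π).1 (hstoch P hP π).2
        (hstoch Q hQ π').1 (hstoch Q hQ π').2 (le_trans hb0 (le_of_lt h₂.1)) h₂.2 s]
    exact hb γ₁ h₁ γ₂ h₂
  choose b hb0 hb1 hb using hatom
  -- take the sup of all the thresholds
  have hUne : Nonempty {P // P ∈ U} := ⟨⟨hU.choose, hU.choose_spec⟩⟩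
  set ι := ((S → A) × (S → A) × S × {P // P ∈ U} × {Q // Q ∈ U}) with hι
  have hιne : Nonempty ι := by
    refine ⟨⟨Classical.arbitrary _, Classical.arbitrary _, Classical.arbitrary _,
      Classical.arbitrary _, Classical.arbitrary _⟩⟩
  have hune : (Finset.univ : Finset ι).Nonempty := Finset.univ_nonempty
  set γbar : ℝ :=
    Finset.univ.sup' hune (fun x : ι => b x.1 x.2.1 x.2.2.1 x.2.2.2.1.1 x.2.2.2.2.1) with hγb
  have hγbar0 : 0 ≤ γbar := by
    obtain ⟨x, hx⟩ := hune
    exact le_trans (hb0 x.1 x.2.1 x.2.2.1 x.2.2.2.1.1 x.2.2.2.2.1)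
      (Finset.le_sup' (fun x : ι => b x.1 x.2.1 x.2.2.1 x.2.2.2.1.1 x.2.2.2.2.1) hx)
  have hγbar1 : γbar < 1 :=
    (Finset.sup'_lt_iff hune).2 fun x _ => hb1 x.1 x.2.1 x.2.2.1 x.2.2.2.1.1 x.2.2.2.2.1
  -- stability of atomic comparisons on (γbar, 1)
  have hatom' : ∀ (π π' : S → A) (s : S) (P : S → A → S → ℝ), ∀ hP : P ∈ U,
      ∀ (Q : S → A → S → ℝ), ∀ hQ : Q ∈ U,
      ∀ γ₁ ∈ Set.Ioo γbar (1:ℝ), ∀ γ₂ ∈ Set.Ioo γbar (1:ℝ),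
        (valueFn r P π γ₁ s ≤ valueFn r Q π' γ₁ s ↔
          valueFn r P π γ₂ s ≤ valueFn r Q π' γ₂ s) := by
    intro π π' s P hP Q hQ γ₁ h₁ γ₂ h₂
    have hble : b π π' s P Q ≤ γbar :=
      Finset.le_sup' (fun x : ι => b x.1 x.2.1 x.2.2.1 x.2.2.2.1.1 x.2.2.2.2.1)
        (Finset.mem_univ (⟨π, π', s, ⟨P, hP⟩, ⟨Q, hQ⟩⟩ : ι))
    exact hb π π' s P Q hP hQ γ₁ ⟨lt_of_le_of_lt hble h₁.1, h₁.2⟩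
      γ₂ ⟨lt_of_le_of_lt hble h₂.1, h₂.2⟩
  -- stability of the robust comparison on (γbar, 1)
  have hrv : ∀ (π π' : S → A) (s : S),
      ∀ γ₁ ∈ Set.Ioo γbar (1:ℝ), ∀ γ₂ ∈ Set.Ioo γbar (1:ℝ),
        (robustValueFn r U hU π' γ₁ s ≤ robustValueFn r U hU π γ₁ s ↔
          robustValueFn r U hU π' γ₂ s ≤ robustValueFn r U hU π γ₂ s) := by
    intro π π' s γ₁ h₁ γ₂ h₂
    simp only [robustValueFn, Finset.inf'_le_iff, Finset.le_inf'_iff]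
    constructor
    · intro h Q hQ
      obtain ⟨P, hP, hle⟩ := h Q hQ
      exact ⟨P, hP, (hatom' π' π s P hP Q hQ γ₁ h₁ γ₂ h₂).1 hle⟩
    · intro h Q hQ
      obtain ⟨P, hP, hle⟩ := h Q hQ
      exact ⟨P, hP, (hatom' π' π s P hP Q hQ γ₁ h₁ γ₂ h₂).2 hle⟩
  -- stability of robust discounted optimality on (γbar, 1)
  have hopt : ∀ (π : S → A), ∀ γ₁ ∈ Set.Ioo γbar (1:ℝ), ∀ γ₂ ∈ Set.Ioo γbar (1:ℝ),
      RobustDiscountedOptimal r U hU γ₁ π → RobustDiscountedOptimal r U hU γ₂ π := by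
    intro π γ₁ h₁ γ₂ h₂ hd π' s
    exact (hrv π π' s γ₁ h₁ γ₂ h₂).1 (hd π' s)
  refine ⟨γbar, hγbar0, hγbar1, fun γ hγl hγu π => ?_⟩
  have hγmem : γ ∈ Set.Ioo γbar (1:ℝ) := ⟨hγl, hγu⟩
  constructor
  · intro hd
    refine ⟨γ, le_trans hγbar0 (le_of_lt hγl), hγu, fun γ' hγ'l hγ'u => ?_⟩
    exact hopt π γ hγmem γ' ⟨lt_of_lt_of_le hγl hγ'l, hγ'u⟩ hd
  · rintro ⟨γ₀, hγ₀0, hγ₀1, hbw⟩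
    set γ'' : ℝ := max γ₀ γ with hγ''
    have hγ''mem : γ'' ∈ Set.Ioo γbar (1:ℝ) :=
      ⟨lt_of_lt_of_le hγl (le_max_right _ _), max_lt hγ₀1 hγu⟩
    exact hopt π γ'' hγ''mem γ hγmem (hbw γ'' (le_max_left _ _) hγ''mem.2)
end

section
/- Let S be a nonempty finite set, m ∈ ℕ with m ≥ 1, β ∈ ℕ, and let p⁰ ∈ Δ(S) satisfy m·p⁰(s) ∈ ℕ for every s ∈ S. Set α = β/m and define U = {p ∈ Δ(S) : |p(s) − p⁰(s)| ≤ α for all s ∈ S} (the ℓ∞-ball of radius α around p⁰ intersected with the simplex). Then every extreme point q of the convex set U satisfies m·q(s) ∈ ℤ for every s ∈ S. -/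
/-- Extreme points of the `ℓ∞`-ball of radius `β/m` around a rational point `p⁰` of the
simplex, intersected with the simplex, have coordinates that are integer multiples of
`1/m`. -/
theorem extreme_points_linfty_ball_rational
    {S : Type*} [Fintype S] [Nonempty S]
    (m : ℕ) (hm : 1 ≤ m) (β : ℕ)
    (p0 : S → ℝ) (hp0nonneg : ∀ s, 0 ≤ p0 s) (hp0sum : ∑ s, p0 s = 1)
    (hp0rat : ∀ s, ∃ k : ℕ, (m : ℝ) * p0 s = k) :
    ∀ q ∈ Set.extremePoints ℝ
        {p : S → ℝ | (∀ s, 0 ≤ p s) ∧ (∑ s, p s = 1) ∧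
          ∀ s, |p s - p0 s| ≤ (β : ℝ) / m},
      ∀ s : S, ∃ z : ℤ, (m : ℝ) * q s = z := by
  classical
  intro q hq
  rw [mem_extremePoints] at hq
  obtain ⟨⟨hq0, hqsum, hqball⟩, hqext⟩ := hq
  by_contra hcon
  push_neg at hcon
  obtain ⟨s, hs⟩ := hcon
  have hmpos : (0:ℝ) < m := by exact_mod_cast Nat.lt_of_lt_of_le Nat.zero_lt_one hm
  have hmne : (m:ℝ) ≠ 0 := ne_of_gt hmpos
  -- strictness at "bad" coordinates
  have hstrict : ∀ t, (¬ ∃ z : ℤ, (m:ℝ) * q t = z) →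
      0 < q t ∧ |q t - p0 t| < (β:ℝ)/m := by
    intro t ht
    constructor
    · rcases lt_or_eq_of_le (hq0 t) with h | h
      · exact h
      · exact absurd ⟨0, by rw [← h]; simp⟩ ht
    · rcases lt_or_eq_of_le (hqball t) with h | h
      · exact h
      · exfalso
        obtain ⟨k, hk⟩ := hp0rat t
        have hβm : (0:ℝ) ≤ (β:ℝ)/m := by positivity
        rcases (abs_eq hβm).mp h with h' | h'
        · refine ht ⟨(k : ℤ) + β, ?_⟩
          have : q t = p0 t + (β:ℝ)/m := by linarith
          rw [this]
          push_cast
          field_simp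
          linarith [hk]
        · refine ht ⟨(k : ℤ) - β, ?_⟩
          have : q t = p0 t - (β:ℝ)/m := by linarith
          rw [this]
          push_cast
          field_simp
          linarith [hk]
  -- the set of bad coordinates
  set B : Finset S := Finset.univ.filter (fun t => ¬ ∃ z : ℤ, (m:ℝ) * q t = z) with hBdef
  have hsB : s ∈ B := by simp [hBdef, hs]
  have hBmem : ∀ t ∈ B, ¬ ∃ z : ℤ, (m:ℝ) * q t = z := by
    intro t ht; simpa [hBdef] using ht
  -- total sum is the integer m
  have htotal : ∑ t, (m:ℝ) * q t = (m:ℝ) := by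
    rw [← Finset.mul_sum, hqsum, mul_one]
  -- there is a second bad coordinate
  have hs2 : ∃ s2 ∈ B, s2 ≠ s := by
    by_contra hno
    push_neg at hno
    have hBeq : B = {s} := by
      apply Finset.eq_singleton_iff_unique_mem.mpr
      exact ⟨hsB, fun t ht => hno t ht⟩
    set Z : S → ℤ := fun t =>
      if h : ∃ z : ℤ, (m:ℝ) * q t = z then h.choose else 0 with hZdef
    have hZspec : ∀ t ∉ B, (m:ℝ) * q t = Z t := by
      intro t ht
      have h : ∃ z : ℤ, (m:ℝ) * q t = z := by
        by_contra h'
        exact ht (Finset.mem_filter.mpr ⟨Finset.mem_univ t, h'⟩)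
      simp only [hZdef, dif_pos h]
      exact h.choose_spec
    have hsplit : ∑ t ∈ B, (m:ℝ) * q t + ∑ t ∈ Bᶜ, (m:ℝ) * q t = (m:ℝ) := by
      rw [Finset.sum_add_sum_compl]; exact htotal
    have hcompl : ∑ t ∈ Bᶜ, (m:ℝ) * q t = ((∑ t ∈ Bᶜ, Z t : ℤ) : ℝ) := by
      push_cast
      exact Finset.sum_congr rfl (fun t ht => hZspec t (Finset.mem_compl.mp ht))
    rw [hcompl, hBeq, Finset.sum_singleton] at hsplit
    exact hs ((m : ℤ) - ∑ t ∈ ({s}ᶜ : Finset S), Z t) (by push_cast at hsplit ⊢; linarith)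
  obtain ⟨s2, hs2B, hs2ne⟩ := hs2
  obtain ⟨hqs_pos, hqs_lt⟩ := hstrict s (hBmem s hsB)
  obtain ⟨hqs2_pos, hqs2_lt⟩ := hstrict s2 (hBmem s2 hs2B)
  -- the perturbation
  set ε : ℝ := min (min (q s) (q s2))
      (min ((β:ℝ)/m - |q s - p0 s|) ((β:ℝ)/m - |q s2 - p0 s2|)) with hεdef
  have hε : 0 < ε := by
    apply lt_min (lt_min hqs_pos hqs2_pos)
    exact lt_min (by linarith) (by linarith)
  have hε1 : ε ≤ q s := le_trans (min_le_left _ _) (min_le_left _ _)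
  have hε2 : ε ≤ q s2 := le_trans (min_le_left _ _) (min_le_right _ _)
  have hε3 : ε ≤ (β:ℝ)/m - |q s - p0 s| := le_trans (min_le_right _ _) (min_le_left _ _)
  have hε4 : ε ≤ (β:ℝ)/m - |q s2 - p0 s2| := le_trans (min_le_right _ _) (min_le_right _ _)
  set d : S → ℝ := fun t => if t = s then ε else if t = s2 then -ε else 0 with hddef
  have hds : d s = ε := by simp [hddef]
  have hds2 : d s2 = -ε := by
    have h : ¬ s2 = s := hs2ne
    simp [hddef, h]
  have hd0 : ∀ t, t ≠ s → t ≠ s2 → d t = 0 := by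
    intro t h1 h2; simp [hddef, h1, h2]
  have hsumd : ∑ t, d t = 0 := by
    have heach : ∀ t, d t = (if t = s then ε else 0) + (if t = s2 then -ε else 0) := by
      intro t
      by_cases h1 : t = s
      · rw [h1, hds, if_pos rfl, if_neg (show ¬ s = s2 from fun h => hs2ne h.symm)]; ring
      · by_cases h2 : t = s2
        · rw [h2, hds2, if_neg hs2ne, if_pos rfl]; ring
        · rw [hd0 t h1 h2, if_neg h1, if_neg h2]; ring
    rw [Finset.sum_congr rfl (fun t _ => heach t), Finset.sum_add_distrib,
      Finset.sum_ite_eq' Finset.univ s, Finset.sum_ite_eq' Finset.univ s2]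
    simp
  have habs : ∀ (c : ℝ), |c| = 1 → ∀ t, |q t + c * d t - p0 t| ≤ (β:ℝ)/m := by
    intro c hc t
    by_cases h1 : t = s
    · rw [h1, hds]
      calc |q s + c * ε - p0 s| = |(q s - p0 s) + c * ε| := by ring_nf
        _ ≤ |q s - p0 s| + |c * ε| := abs_add_le _ _
        _ = |q s - p0 s| + ε := by rw [abs_mul, hc, one_mul, abs_of_pos hε]
        _ ≤ (β:ℝ)/m := by linarith
    · by_cases h2 : t = s2
      · rw [h2, hds2]
        calc |q s2 + c * (-ε) - p0 s2| = |(q s2 - p0 s2) + c * (-ε)| := by ring_nf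
          _ ≤ |q s2 - p0 s2| + |c * (-ε)| := abs_add_le _ _
          _ = |q s2 - p0 s2| + ε := by
              rw [abs_mul, hc, one_mul, abs_neg, abs_of_pos hε]
          _ ≤ (β:ℝ)/m := by linarith
      · rw [hd0 t h1 h2, mul_zero, add_zero]
        exact hqball t
  have hmemU : ∀ (c : ℝ), |c| = 1 →
      (fun t => q t + c * d t) ∈ {p : S → ℝ | (∀ s, 0 ≤ p s) ∧ (∑ s, p s = 1) ∧
        ∀ s, |p s - p0 s| ≤ (β : ℝ) / m} := by
    intro c hc
    have hc1 : c = 1 ∨ c = -1 := by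
      rcases (abs_eq (by norm_num : (0:ℝ) ≤ 1)).mp hc with h | h
      · exact Or.inl h
      · exact Or.inr h
    refine ⟨?_, ?_, habs c hc⟩
    · intro t
      show 0 ≤ q t + c * d t
      by_cases h1 : t = s
      · rw [h1, hds]
        rcases hc1 with h | h <;> rw [h] <;> nlinarith
      · by_cases h2 : t = s2
        · rw [h2, hds2]
          rcases hc1 with h | h <;> rw [h] <;> nlinarith
        · rw [hd0 t h1 h2, mul_zero, add_zero]; exact hq0 t
    · show ∑ t, (q t + c * d t) = 1
      rw [Finset.sum_add_distrib, hqsum, ← Finset.mul_sum, hsumd, mul_zero, add_zero]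
  have hx := hmemU 1 (by norm_num)
  have hy := hmemU (-1) (by norm_num)
  have hseg : q ∈ openSegment ℝ (fun t => q t + 1 * d t) (fun t => q t + (-1) * d t) := by
    refine ⟨1/2, 1/2, by norm_num, by norm_num, by norm_num, ?_⟩
    funext t
    simp only [Pi.add_apply, Pi.smul_apply, smul_eq_mul]
    ring
  have heq := (hqext _ hx _ hy hseg).1
  have hfin := congrFun heq s
  simp only [hds, one_mul] at hfin
  linarith
end

section
/- Let S be a nonempty finite set, m ∈ ℕ with m ≥ 1, β ∈ ℕ, and let p⁰ ∈ Δ(S) satisfy m·p⁰(s) ∈ ℕ for every s ∈ S. Set α = β/m and define U = {p ∈ Δ(S) : Σ_{s ∈ S} |p(s) − p⁰(s)| ≤ α} (the ℓ₁-ball of radius α around p⁰ intersected with the simplex). Then every extreme point q of the convex set U satisfies 2m·q(s) ∈ ℤ for every s ∈ S. -/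
open Finset

private lemma extreme_no_dir {E : Type*} [AddCommGroup E] [Module ℝ E]
    {U : Set E} {q v : E} (hq : q ∈ Set.extremePoints ℝ U)
    (h1 : q + v ∈ U) (h2 : q - v ∈ U) : v = 0 := by
  have hmem : q ∈ openSegment ℝ (q + v) (q - v) :=
    ⟨1/2, 1/2, by norm_num, by norm_num, by norm_num, by module⟩
  exact add_eq_left.mp (hq.2 h1 h2 hmem)

private lemma perturb {S : Type*} [Fintype S] [DecidableEq S] {α : ℝ} {q p0 : S → ℝ}
    (hq : q ∈ Set.extremePoints ℝ
      {p : S → ℝ | (∀ s, 0 ≤ p s) ∧ (∑ s, p s = 1) ∧ ∑ s, |p s - p0 s| ≤ α})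
    {s1 s2 : S} (hne : s1 ≠ s2) {ε : ℝ} (hε : 0 < ε)
    (h1 : ε ≤ q s1) (h2 : ε ≤ q s2)
    (hL1 : ∑ s, |q s + ((if s = s1 then ε else 0) - (if s = s2 then ε else 0)) - p0 s| ≤ α)
    (hL2 : ∑ s, |q s - ((if s = s1 then ε else 0) - (if s = s2 then ε else 0)) - p0 s| ≤ α) :
    False := by
  obtain ⟨hnn, hsum, -⟩ := hq.1
  set d : S → ℝ := fun s => (if s = s1 then ε else 0) - (if s = s2 then ε else 0) with hd
  have hdsum : ∑ s, d s = 0 := by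
    simp [hd, Finset.sum_sub_distrib]
  have key : ∀ c : ℝ, c = 1 ∨ c = -1 → q + c • d ∈
      {p : S → ℝ | (∀ s, 0 ≤ p s) ∧ (∑ s, p s = 1) ∧ ∑ s, |p s - p0 s| ≤ α} := by
    intro c hc
    refine ⟨?_, ?_, ?_⟩
    · intro s
      simp only [Pi.add_apply, Pi.smul_apply, smul_eq_mul, hd]
      rcases hc with rfl | rfl
      · by_cases e1 : s = s1
        · subst e1; simp [hne]; linarith [hnn s]
        · by_cases e2 : s = s2
          · subst e2; simp [e1]; linarith
          · simp [e1, e2]; exact hnn s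
      · by_cases e1 : s = s1
        · subst e1; simp [hne]; linarith
        · by_cases e2 : s = s2
          · subst e2; simp [e1]; linarith [hnn s]
          · simp [e1, e2]; exact hnn s
    · have : ∑ s, (q + c • d) s = ∑ s, q s + c * ∑ s, d s := by
        simp only [Pi.add_apply, Pi.smul_apply, smul_eq_mul]
        rw [Finset.mul_sum, Finset.sum_add_distrib]
      rw [this, hdsum, hsum]; ring
    · rcases hc with rfl | rfl
      · simpa [hd] using hL1
      · have heq : ∀ s, q s + (-1 : ℝ) * (fun s => (if s = s1 then ε else 0) - (if s = s2 then ε else 0)) s - p0 s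
            = q s - ((if s = s1 then ε else 0) - (if s = s2 then ε else 0)) - p0 s := by
          intro s; simp; ring
        calc ∑ s, |q s + (-1:ℝ) * d s - p0 s|
            = ∑ s, |q s - ((if s = s1 then ε else 0) - (if s = s2 then ε else 0)) - p0 s| := by
              refine Finset.sum_congr rfl fun s _ => ?_
              rw [hd, heq s]
          _ ≤ α := hL2
  have hv := extreme_no_dir hq (by simpa using key 1 (Or.inl rfl)) (by
    have := key (-1) (Or.inr rfl)
    simpa [neg_one_smul, sub_eq_add_neg] using this)
  have : d s1 = 0 := by rw [hv]; rfl
  simp [hd, hne] at this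
  exact absurd this (by linarith)

private lemma abs_perturb {a b ε : ℝ} (hε : 0 ≤ ε) (ha : ε ≤ |a|) (hb : ε ≤ |b|)
    (hsame : 0 < a * b) : |a + ε| + |b - ε| ≤ |a| + |b| := by
  rcases mul_pos_iff.mp hsame with ⟨ha0, hb0⟩ | ⟨ha0, hb0⟩
  · rw [abs_of_pos ha0] at ha ⊢
    rw [abs_of_pos hb0] at hb ⊢
    rw [abs_of_pos (by linarith), abs_of_nonneg (by linarith)]
    linarith
  · rw [abs_of_neg ha0] at ha ⊢
    rw [abs_of_neg hb0] at hb ⊢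
    rw [abs_of_nonpos (by linarith), abs_of_neg (by linarith)]
    linarith

private lemma sum_split {S : Type*} [Fintype S] [DecidableEq S] (f : S → ℝ)
    {s1 s2 : S} (hne : s1 ≠ s2) :
    ∑ s, f s = f s1 + f s2 + ∑ s ∈ (univ.erase s1).erase s2, f s := by
  rw [← Finset.add_sum_erase _ f (mem_univ s1),
      ← Finset.add_sum_erase _ f (Finset.mem_erase.mpr ⟨hne.symm, mem_univ s2⟩)]
  ring

/-- the two ℓ₁ side conditions of `perturb`, packaged -/
private lemma l1_bound {S : Type*} [Fintype S] [DecidableEq S]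
    (q p0 : S → ℝ) {α : ℝ} {s1 s2 : S} (hne : s1 ≠ s2) {ε : ℝ} (hε : 0 < ε)
    (hl1 : ∑ s, |q s - p0 s| ≤ α)
    (hkey : |q s1 - p0 s1 + ε| + |q s2 - p0 s2 - ε|
        ≤ |q s1 - p0 s1| + |q s2 - p0 s2| + (α - ∑ s, |q s - p0 s|)) :
    ∑ s, |q s + ((if s = s1 then ε else 0) - (if s = s2 then ε else 0)) - p0 s| ≤ α := by
  rw [sum_split (fun s => |q s + ((if s = s1 then ε else 0) - (if s = s2 then ε else 0)) - p0 s|) hne]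
  have hE : ∑ s ∈ (univ.erase s1).erase s2,
      |q s + ((if s = s1 then ε else 0) - (if s = s2 then ε else 0)) - p0 s|
      = ∑ s ∈ (univ.erase s1).erase s2, |q s - p0 s| := by
    refine Finset.sum_congr rfl fun s hs => ?_
    have h2 : s ≠ s2 := (Finset.mem_erase.mp hs).1
    have h1 : s ≠ s1 := (Finset.mem_erase.mp (Finset.mem_erase.mp hs).2).1
    simp [h1, h2]
  rw [hE]
  have hbase := sum_split (fun s => |q s - p0 s|) hne
  have e1 : q s1 + ((if s1 = s1 then ε else 0) - (if s1 = s2 then ε else 0)) - p0 s1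
      = q s1 - p0 s1 + ε := by rw [if_pos rfl, if_neg hne]; ring
  have e2 : q s2 + ((if s2 = s1 then ε else 0) - (if s2 = s2 then ε else 0)) - p0 s2
      = q s2 - p0 s2 - ε := by rw [if_pos rfl, if_neg (Ne.symm hne)]; ring
  rw [e1, e2]
  linarith

/-- Extreme points of the `ℓ₁`-ball of radius `β/m` around a rational point `p⁰` of the
simplex, intersected with the simplex, have coordinates that are integer multiples of
`1/(2m)`. -/
theorem extreme_points_l1_ball_rational
    {S : Type*} [Fintype S] [Nonempty S]
    (m : ℕ) (hm : 1 ≤ m) (β : ℕ)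
    (p0 : S → ℝ) (hp0nonneg : ∀ s, 0 ≤ p0 s) (hp0sum : ∑ s, p0 s = 1)
    (hp0rat : ∀ s, ∃ k : ℕ, (m : ℝ) * p0 s = k) :
    ∀ q ∈ Set.extremePoints ℝ
        {p : S → ℝ | (∀ s, 0 ≤ p s) ∧ (∑ s, p s = 1) ∧
          ∑ s, |p s - p0 s| ≤ (β : ℝ) / m},
      ∀ s : S, ∃ z : ℤ, (2 * m : ℝ) * q s = z := by
  classical
  intro q hq
  obtain ⟨hqnn, hqsum, hql1⟩ := hq.1
  by_contra hcon
  push_neg at hcon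
  obtain ⟨s0, hs0⟩ := hcon
  have hm0 : (0 : ℝ) < m := by exact_mod_cast hm
  choose k hk using hp0rat
  set T : Finset S := univ.filter (fun s => ¬ ∃ z : ℤ, (2 * m : ℝ) * q s = z) with hTdef
  have hmemT : ∀ s, s ∈ T ↔ ¬ ∃ z : ℤ, (2 * m : ℝ) * q s = z := by
    intro s; simp [hTdef]
  have hs0T : s0 ∈ T := (hmemT s0).mpr (by push_neg; exact hs0)
  have hout : ∀ s, s ∉ T → ∃ z : ℤ, (2 * m : ℝ) * q s = z := by
    intro s hs; by_contra h; exact hs ((hmemT s).mpr h)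
  have hout' : ∀ s, ∃ zz : ℤ, s ∉ T → (2 * m : ℝ) * q s = zz := by
    intro s
    by_cases hs : s ∈ T
    · exact ⟨0, fun h => absurd hs h⟩
    · exact ⟨(hout s hs).choose, fun _ => (hout s hs).choose_spec⟩
  choose z hz using hout'
  have hTpos : ∀ s ∈ T, 0 < q s := by
    intro s hs
    rcases lt_or_eq_of_le (hqnn s) with h | h
    · exact h
    · exact absurd ⟨0, by rw [← h]; simp⟩ ((hmemT s).mp hs)
  have hTne : ∀ s ∈ T, q s ≠ p0 s := by
    intro s hs heq
    refine ((hmemT s).mp hs) ⟨2 * k s, ?_⟩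
    rw [heq]
    push_cast
    have := hk s
    linarith
  -- case |T| = 1
  by_cases hcard1 : T.card = 1
  · obtain ⟨t, hTt⟩ := Finset.card_eq_one.mp hcard1
    have htT : t ∈ T := by rw [hTt]; exact Finset.mem_singleton_self t
    have hmain : (2 * m : ℝ) * q t + ∑ s ∈ univ.erase t, (2 * m : ℝ) * q s
        = ∑ s, (2 * m : ℝ) * q s :=
      Finset.add_sum_erase univ (fun s => (2 * m : ℝ) * q s) (mem_univ t)
    have htot : ∑ s, (2 * m : ℝ) * q s = 2 * m := by
      rw [← Finset.mul_sum, hqsum, mul_one]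
    have hrest : ∑ s ∈ univ.erase t, (2 * m : ℝ) * q s
        = ((∑ s ∈ univ.erase t, z s : ℤ) : ℝ) := by
      rw [Int.cast_sum]
      refine Finset.sum_congr rfl fun s hs => ?_
      have hst : s ≠ t := (Finset.mem_erase.mp hs).1
      exact hz s (by rw [hTt]; simpa using hst)
    refine ((hmemT t).mp htT) ⟨2 * m - ∑ s ∈ univ.erase t, z s, ?_⟩
    rw [Int.cast_sub, ← hrest]
    push_cast
    linarith [hmain, htot]
  -- now |T| ≥ 2
  have hT2 : 1 < T.card := by
    have := Finset.card_pos.mpr ⟨s0, hs0T⟩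
    omega
  by_cases hsame : ∃ s1 ∈ T, ∃ s2 ∈ T, s1 ≠ s2 ∧ 0 < (q s1 - p0 s1) * (q s2 - p0 s2)
  · obtain ⟨s1, hs1, s2, hs2, hne, hpr⟩ := hsame
    set ε := min (min (q s1) (q s2)) (min |q s1 - p0 s1| |q s2 - p0 s2|) with hedef
    have habs1 : 0 < |q s1 - p0 s1| := abs_pos.mpr (sub_ne_zero.mpr (hTne s1 hs1))
    have habs2 : 0 < |q s2 - p0 s2| := abs_pos.mpr (sub_ne_zero.mpr (hTne s2 hs2))
    have hε : 0 < ε := lt_min (lt_min (hTpos s1 hs1) (hTpos s2 hs2)) (lt_min habs1 habs2)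
    have hεq1 : ε ≤ q s1 := le_trans (min_le_left _ _) (min_le_left _ _)
    have hεq2 : ε ≤ q s2 := le_trans (min_le_left _ _) (min_le_right _ _)
    have hεa1 : ε ≤ |q s1 - p0 s1| := le_trans (min_le_right _ _) (min_le_left _ _)
    have hεa2 : ε ≤ |q s2 - p0 s2| := le_trans (min_le_right _ _) (min_le_right _ _)
    refine perturb hq hne hε hεq1 hεq2 ?_ ?_
    · refine l1_bound q p0 hne hε hql1 ?_
      have := abs_perturb hε.le hεa1 hεa2 hpr
      linarith
    · have h2 : ∑ s, |q s + ((if s = s2 then ε else 0) - (if s = s1 then ε else 0)) - p0 s|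
          ≤ (β : ℝ) / m := by
        refine l1_bound q p0 (Ne.symm hne) hε hql1 ?_
        have := abs_perturb hε.le hεa2 hεa1 (by rw [mul_comm]; exact hpr)
        linarith
      calc ∑ s, |q s - ((if s = s1 then ε else 0) - (if s = s2 then ε else 0)) - p0 s|
          = ∑ s, |q s + ((if s = s2 then ε else 0) - (if s = s1 then ε else 0)) - p0 s| := by
            refine Finset.sum_congr rfl fun s _ => ?_
            ring_nf
        _ ≤ (β : ℝ) / m := h2
  by_cases hslack : ∑ s, |q s - p0 s| < (β : ℝ) / m
  · obtain ⟨s1, hs1, s2, hs2, hne⟩ := Finset.one_lt_card.mp hT2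
    set ε := min (min (q s1) (q s2)) (((β : ℝ) / m - ∑ s, |q s - p0 s|) / 2) with hedef
    have hε : 0 < ε := lt_min (lt_min (hTpos s1 hs1) (hTpos s2 hs2)) (by linarith)
    have hεq1 : ε ≤ q s1 := le_trans (min_le_left _ _) (min_le_left _ _)
    have hεq2 : ε ≤ q s2 := le_trans (min_le_left _ _) (min_le_right _ _)
    have hεs : ε ≤ ((β : ℝ) / m - ∑ s, |q s - p0 s|) / 2 := min_le_right _ _
    have key : ∀ a b : ℝ, |a + ε| + |b - ε| ≤ |a| + |b| + ((β : ℝ) / m - ∑ s, |q s - p0 s|) := by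
      intro a b
      have := abs_add_le a ε
      have := abs_sub b ε
      have h1 : |a + ε| ≤ |a| + ε := by simpa [abs_of_pos hε] using abs_add_le a ε
      have h2 : |b - ε| ≤ |b| + ε := by
        calc |b - ε| ≤ |b| + |-ε| := by simpa [sub_eq_add_neg] using abs_add_le b (-ε)
          _ = |b| + ε := by rw [abs_neg, abs_of_pos hε]
      linarith
    refine perturb hq hne hε hεq1 hεq2 ?_ ?_
    · exact l1_bound q p0 hne hε hql1 (key _ _)
    · calc ∑ s, |q s - ((if s = s1 then ε else 0) - (if s = s2 then ε else 0)) - p0 s|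
          = ∑ s, |q s + ((if s = s2 then ε else 0) - (if s = s1 then ε else 0)) - p0 s| := by
            refine Finset.sum_congr rfl fun s _ => ?_
            ring_nf
        _ ≤ (β : ℝ) / m := l1_bound q p0 (Ne.symm hne) hε hql1 (key _ _)
  -- tight case, all signs distinct
  push_neg at hsame
  have htight : ∑ s, |q s - p0 s| = (β : ℝ) / m := le_antisymm hql1 (not_lt.mp hslack)
  set pos := T.filter (fun s => p0 s < q s) with hposdef
  set neg := T.filter (fun s => q s < p0 s) with hnegdef
  have hposcard : pos.card ≤ 1 := by
    rw [Finset.card_le_one]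
    intro a ha b hb
    by_contra hab
    obtain ⟨haT, halt⟩ := Finset.mem_filter.mp ha
    obtain ⟨hbT, hblt⟩ := Finset.mem_filter.mp hb
    have := hsame a haT b hbT hab
    nlinarith
  have hnegcard : neg.card ≤ 1 := by
    rw [Finset.card_le_one]
    intro a ha b hb
    by_contra hab
    obtain ⟨haT, halt⟩ := Finset.mem_filter.mp ha
    obtain ⟨hbT, hblt⟩ := Finset.mem_filter.mp hb
    have := hsame a haT b hbT hab
    nlinarith
  have hsub : T ⊆ pos ∪ neg := by
    intro s hs
    rcases lt_or_gt_of_ne (hTne s hs) with h | h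
    · exact Finset.mem_union_right _ (Finset.mem_filter.mpr ⟨hs, h⟩)
    · exact Finset.mem_union_left _ (Finset.mem_filter.mpr ⟨hs, h⟩)
  have hcards : pos.card = 1 ∧ neg.card = 1 := by
    have h1 := Finset.card_le_card hsub
    have h2 := Finset.card_union_le pos neg
    omega
  obtain ⟨s1, hpos1⟩ := Finset.card_eq_one.mp hcards.1
  obtain ⟨s2, hneg1⟩ := Finset.card_eq_one.mp hcards.2
  have hs1p : s1 ∈ pos := by rw [hpos1]; exact Finset.mem_singleton_self s1
  have hs2n : s2 ∈ neg := by rw [hneg1]; exact Finset.mem_singleton_self s2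
  obtain ⟨hs1T, hgt1⟩ := Finset.mem_filter.mp hs1p
  obtain ⟨hs2T, hlt2⟩ := Finset.mem_filter.mp hs2n
  have hne12 : s1 ≠ s2 := fun h => by rw [h] at hgt1; linarith
  set E := (univ.erase s1).erase s2 with hEdef
  have hEnotT : ∀ s ∈ E, s ∉ T := by
    intro s hs hsT
    have h2 : s ≠ s2 := (Finset.mem_erase.mp hs).1
    have h1 : s ≠ s1 := (Finset.mem_erase.mp (Finset.mem_erase.mp hs).2).1
    rcases Finset.mem_union.mp (hsub hsT) with h | h
    · rw [hpos1] at h; exact h1 (Finset.mem_singleton.mp h)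
    · rw [hneg1] at h; exact h2 (Finset.mem_singleton.mp h)
  set c : S → ℤ := fun s => z s - 2 * (k s : ℤ) with hcdef
  have hEc : ∀ s ∈ E, (2 * m : ℝ) * (q s - p0 s) = ((c s : ℤ) : ℝ) := by
    intro s hs
    have h1 := hz s (hEnotT s hs)
    have h2 := hk s
    simp only [hcdef]
    push_cast
    linarith
  have hEca : ∀ s ∈ E, (2 * m : ℝ) * |q s - p0 s| = ((|c s| : ℤ) : ℝ) := by
    intro s hs
    rw [show (2 * m : ℝ) * |q s - p0 s| = |(2 * m : ℝ) * (q s - p0 s)| by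
      rw [abs_mul, abs_of_pos (by linarith : (0:ℝ) < 2 * m)],
      hEc s hs, ← Int.cast_abs]
  set A := ∑ s ∈ E, c s with hAdef
  set B := ∑ s ∈ E, |c s| with hBdef
  have hA : (2 * m : ℝ) * ∑ s ∈ E, (q s - p0 s) = (A : ℝ) := by
    rw [Finset.mul_sum, hAdef, Int.cast_sum]
    exact Finset.sum_congr rfl hEc
  have hB : (2 * m : ℝ) * ∑ s ∈ E, |q s - p0 s| = (B : ℝ) := by
    rw [Finset.mul_sum, hBdef, Int.cast_sum]
    exact Finset.sum_congr rfl hEca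
  have hsum0 : (q s1 - p0 s1) + (q s2 - p0 s2) + ∑ s ∈ E, (q s - p0 s) = 0 := by
    have h := sum_split (fun s => q s - p0 s) hne12
    rw [Finset.sum_sub_distrib, hqsum, hp0sum] at h
    rw [hEdef]
    linarith
  have ht' : |q s1 - p0 s1| + |q s2 - p0 s2| + ∑ s ∈ E, |q s - p0 s| = (β : ℝ) / m := by
    have h := sum_split (fun s => |q s - p0 s|) hne12
    rw [hEdef]
    linarith [htight]
  have ha1 : |q s1 - p0 s1| = q s1 - p0 s1 := abs_of_pos (by linarith)
  have ha2 : |q s2 - p0 s2| = -(q s2 - p0 s2) := abs_of_neg (by linarith)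
  have hI : (2 * m : ℝ) * (q s1 - p0 s1) + (2 * m : ℝ) * (q s2 - p0 s2) + (A : ℝ) = 0 := by
    linear_combination (2 * (m : ℝ)) * hsum0 - hA
  have hβm : (2 * m : ℝ) * ((β : ℝ) / m) = 2 * β := by field_simp
  have hII : (2 * m : ℝ) * (q s1 - p0 s1) - (2 * m : ℝ) * (q s2 - p0 s2) + (B : ℝ)
      = 2 * β := by
    linear_combination (2 * (m : ℝ)) * ht' - hB + hβm - (2 * (m : ℝ)) * ha1
      - (2 * (m : ℝ)) * ha2
  obtain ⟨t0, ht0⟩ : ∃ t0 : ℤ, B - A = 2 * t0 := by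
    have hev : Even (B - A) := by
      rw [hBdef, hAdef, ← Finset.sum_sub_distrib]
      apply Finset.even_sum
      intro i _
      rcases abs_choice (c i) with h | h
      · rw [h]; simp
      · rw [h]; exact ⟨-(c i), by ring⟩
    obtain ⟨t0, ht0⟩ := hev
    exact ⟨t0, by omega⟩
  have htB : (B : ℝ) - (A : ℝ) = 2 * (t0 : ℝ) := by exact_mod_cast ht0
  refine ((hmemT s2).mp hs2T) ⟨t0 - β + 2 * (k s2), ?_⟩
  have hk2 := hk s2
  push_cast
  linear_combination ((1 : ℝ)/2) * hI - (1/2) * hII + (1/2) * htB + 2 * hk2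
end
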